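/- arXiv:2002.05145 — 9 statements merged into one kernel-verified Lean document; each statement's English description precedes it below -/
import Mathlib

section
/- Let X be a measurable space, p, p' ∈ (0,1), and F_+, F_− probability measures on X. Let (X'_1,Y'_1),…,(X'_n,Y'_n) be i.i.d. from the distribution P' on X×{−1,+1} given by P'(A×{+1}) = p' F_+(A) and P'(A×{−1}) = (1−p') F_−(A). Set n'_+ = #{i : Y'_i = +1} and n'_− = n − n'_+. For a classifier g : X → {−1,+1}, define the ideally weighted empirical risk R̃_{w*,n}(g) = (p/p')(1/n)Σ_{i:Y'_i=+1} 1{g(X'_i)=−1} + ((1−p)/(1−p'))(1/n)Σ_{i:Y'_i=−1} 1{g(X'_i)=+1} and the plug-in weighted empirical risk R̃_{ŵ*,n}(g) = (p/n'_+)Σ_{i:Y'_i=+1} 1{g(X'_i)=−1} + ((1−p)/n'_−)Σ_{i:Y'_i=−1} 1{g(X'_i)=+1}. Let ε ∈ (0,1/2) with p' ∈ (ε, 1−ε). Then for every δ ∈ (0,1) and every n ≥ 2 log(2/δ)/ε², with probability at least 1−δ: 0 < n'_+ < n and, simultaneously for every measurable classifier g, |R̃_{ŵ*,n}(g) − R̃_{w*,n}(g)|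 ≤ (2/ε²)√(log(2/δ)/(2n)). -/
open MeasureTheory

/-- The distribution on `X × Bool` described by the triplet `(p, F₊, F₋)`:
labels are encoded by `Bool` with `true ↦ +1` and `false ↦ -1`, so that
`P(A × {+1}) = p F₊(A)` and `P(A × {-1}) = (1-p) F₋(A)`. -/
noncomputable def binMeasure {X : Type*} [MeasurableSpace X]
    (p : ℝ) (Fp Fm : Measure X) : Measure (X × Bool) :=
  ENNReal.ofReal p • Fp.map (fun x => (x, true)) +
    ENNReal.ofReal (1 - p) • Fm.map (fun x => (x, false))

/-- Number of positive labels `n'₊` in the sample. -/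
def nPos {X : Type*} {n : ℕ} (ω : Fin n → X × Bool) : ℕ :=
  (Finset.univ.filter fun i => (ω i).2 = true).card

/-- `Σ_{i : Y'ᵢ = +1} 1{g(X'ᵢ) = -1}`. -/
noncomputable def posErr {X : Type*} {n : ℕ} (ω : Fin n → X × Bool) (g : X → Bool) : ℝ :=
  ∑ i, if (ω i).2 = true ∧ g (ω i).1 = false then (1:ℝ) else 0

/-- `Σ_{i : Y'ᵢ = -1} 1{g(X'ᵢ) = +1}`. -/
noncomputable def negErr {X : Type*} {n : ℕ} (ω : Fin n → X × Bool) (g : X → Bool) : ℝ :=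
  ∑ i, if (ω i).2 = false ∧ g (ω i).1 = true then (1:ℝ) else 0

lemma aux_exp_convex {x t : ℝ} (hx1 : -1 ≤ x) (hx2 : x ≤ 1) :
    Real.exp (t * x) ≤ ((1+x)/2) * Real.exp t + ((1-x)/2) * Real.exp (-t) := by
  have h := convexOn_exp.2 (Set.mem_univ t) (Set.mem_univ (-t))
    (by linarith : (0:ℝ) ≤ (1+x)/2) (by linarith : (0:ℝ) ≤ (1-x)/2) (by ring)
  simp only [smul_eq_mul] at h
  rw [show (1+x)/2 * t + (1-x)/2 * (-t) = t * x by ring] at h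
  exact h

lemma aux_bernoulli_mgf (q t : ℝ) (h0 : 0 ≤ q) (h1 : q ≤ 1) :
    q * Real.exp (t * (1 - q)) + (1 - q) * Real.exp (t * (0 - q)) ≤ Real.exp (t ^ 2 / 2) := by
  have k1 := aux_exp_convex (x := 1 - q) (t := t) (by linarith) (by linarith)
  have k2 := aux_exp_convex (x := 0 - q) (t := t) (by linarith) (by linarith)
  calc q * Real.exp (t * (1 - q)) + (1 - q) * Real.exp (t * (0 - q))
      ≤ q * (((1+(1-q))/2) * Real.exp t + ((1-(1-q))/2) * Real.exp (-t))
        + (1 - q) * (((1+(0-q))/2) * Real.exp t + ((1-(0-q))/2) * Real.exp (-t)) := by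
        refine add_le_add (mul_le_mul_of_nonneg_left k1 h0)
          (mul_le_mul_of_nonneg_left k2 (by linarith))
    _ = Real.cosh t := by rw [Real.cosh_eq]; ring
    _ ≤ Real.exp (t ^ 2 / 2) := Real.cosh_le_exp_half_sq t

lemma aux_measurable_expind {X : Type*} [MeasurableSpace X] (q t : ℝ) :
    Measurable (fun z : X × Bool => Real.exp (t * ((if z.2 = true then (1:ℝ) else 0) - q))) := by
  apply Real.measurable_exp.comp
  apply Measurable.const_mul
  exact ((measurable_of_countable (fun b : Bool => if b = true then (1:ℝ) else 0)).comp
    measurable_snd).sub measurable_const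

lemma aux_binMeasure_prob {X : Type*} [MeasurableSpace X] {q : ℝ}
    (hq0 : 0 ≤ q) (hq1 : q ≤ 1) (Fp Fm : Measure X)
    [IsProbabilityMeasure Fp] [IsProbabilityMeasure Fm] :
    IsProbabilityMeasure (binMeasure q Fp Fm) := by
  constructor
  rw [binMeasure, Measure.add_apply, Measure.smul_apply, Measure.smul_apply,
    Measure.map_apply (measurable_prodMk_right (y := true)) .univ,
    Measure.map_apply (measurable_prodMk_right (y := false)) .univ]
  simp only [Set.preimage_univ, measure_univ, smul_eq_mul, mul_one]
  rw [← ENNReal.ofReal_add hq0 (by linarith), ← ENNReal.ofReal_one]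
  norm_num

lemma aux_integrable_expind {X : Type*} [MeasurableSpace X] (q t : ℝ) (hq0 : 0 ≤ q) (hq1 : q ≤ 1)
    (ν : Measure (X × Bool)) [IsFiniteMeasure ν] :
    Integrable (fun z : X × Bool => Real.exp (t * ((if z.2 = true then (1:ℝ) else 0) - q))) ν := by
  refine (integrable_const (Real.exp |t|)).mono'
    (aux_measurable_expind q t).aestronglyMeasurable (ae_of_all _ fun z => ?_)
  rw [Real.norm_eq_abs, abs_of_pos (Real.exp_pos _), Real.exp_le_exp]
  have hb : |(if z.2 = true then (1:ℝ) else 0) - q| ≤ 1 := by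
    split_ifs <;> rw [abs_le] <;> constructor <;> linarith
  calc t * ((if z.2 = true then (1:ℝ) else 0) - q) ≤ |t * ((if z.2 = true then (1:ℝ) else 0) - q)| :=
        le_abs_self _
    _ = |t| * |(if z.2 = true then (1:ℝ) else 0) - q| := abs_mul _ _
    _ ≤ |t| * 1 := by gcongr
    _ = |t| := mul_one _

lemma aux_binMeasure_integral {X : Type*} [MeasurableSpace X] {q : ℝ} (hq0 : 0 ≤ q) (hq1 : q ≤ 1)
    (t : ℝ) (Fp Fm : Measure X) [IsProbabilityMeasure Fp] [IsProbabilityMeasure Fm] :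
    ∫ z : X × Bool, Real.exp (t * ((if z.2 = true then (1:ℝ) else 0) - q)) ∂(binMeasure q Fp Fm)
      = q * Real.exp (t * (1 - q)) + (1 - q) * Real.exp (t * (0 - q)) := by
  haveI := aux_binMeasure_prob hq0 hq1 Fp Fm
  have hI := aux_integrable_expind (X := X) q t hq0 hq1 (binMeasure q Fp Fm)
  have hI1 : Integrable (fun z : X × Bool => Real.exp (t * ((if z.2 = true then (1:ℝ) else 0) - q)))
      (ENNReal.ofReal q • Fp.map (fun x => (x, true))) :=
    hI.mono_measure (by rw [binMeasure]; exact Measure.le_add_right le_rfl)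
  have hI2 : Integrable (fun z : X × Bool => Real.exp (t * ((if z.2 = true then (1:ℝ) else 0) - q)))
      (ENNReal.ofReal (1 - q) • Fm.map (fun x => (x, false))) :=
    hI.mono_measure (by rw [binMeasure]; exact Measure.le_add_left le_rfl)
  rw [binMeasure, integral_add_measure hI1 hI2, integral_smul_measure, integral_smul_measure,
    integral_map (measurable_prodMk_right (y := true)).aemeasurable
      (aux_measurable_expind q t).aestronglyMeasurable,
    integral_map (measurable_prodMk_right (y := false)).aemeasurable
      (aux_measurable_expind q t).aestronglyMeasurable]
  simp only [if_pos rfl, if_neg (by simp : ¬(false = true))]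
  rw [integral_const, integral_const]
  simp [ENNReal.toReal_ofReal hq0, ENNReal.toReal_ofReal (by linarith : (0:ℝ) ≤ 1 - q),
    smul_eq_mul, measure_univ]

lemma aux_chernoff {X : Type*} [MeasurableSpace X] {q : ℝ} (hq0 : 0 ≤ q) (hq1 : q ≤ 1)
    (Fp Fm : Measure X) [IsProbabilityMeasure Fp] [IsProbabilityMeasure Fm]
    (n : ℕ) (a : ℝ) (ha : 0 ≤ a) :
    ((Measure.pi fun _ : Fin n => binMeasure q Fp Fm)
      ({ω : Fin n → X × Bool | (n:ℝ)*a ≤ ∑ i, ((if (ω i).2 = true then (1:ℝ) else 0) - q)} ∪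
       {ω : Fin n → X × Bool | ∑ i, ((if (ω i).2 = true then (1:ℝ) else 0) - q) ≤ -((n:ℝ)*a)}))
      ≤ ENNReal.ofReal (2 * Real.exp (-((n:ℝ)*a^2)/2)) := by
  letI : MeasureSpace (X × Bool) := ⟨binMeasure q Fp Fm⟩
  haveI : IsProbabilityMeasure (volume : Measure (X × Bool)) := aux_binMeasure_prob hq0 hq1 Fp Fm
  have hvol : (Measure.pi fun _ : Fin n => binMeasure q Fp Fm)
      = (volume : Measure (Fin n → X × Bool)) := rfl
  haveI : IsProbabilityMeasure (volume : Measure (Fin n → X × Bool)) := by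
    rw [← hvol]; infer_instance
  set S : (Fin n → X × Bool) → ℝ :=
    fun ω => ∑ i, ((if (ω i).2 = true then (1:ℝ) else 0) - q) with hS
  have hexp_prod : ∀ t : ℝ, ∀ ω : Fin n → X × Bool,
      Real.exp (t * S ω) = ∏ i, Real.exp (t * ((if (ω i).2 = true then (1:ℝ) else 0) - q)) := by
    intro t ω
    rw [← Real.exp_sum, hS, Finset.mul_sum]
  have h_int : ∀ t : ℝ, Integrable (fun ω => Real.exp (t * S ω)) volume := by
    intro t
    have := Integrable.fintype_prod (ι := Fin n)
      (f := fun _ (z : X × Bool) => Real.exp (t * ((if z.2 = true then (1:ℝ) else 0) - q)))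
      (fun _ => aux_integrable_expind q t hq0 hq1 (volume : Measure (X × Bool)))
    simp only [← hexp_prod t] at this
    exact this
  have hmgf : ∀ t : ℝ, ProbabilityTheory.mgf S volume t ≤ Real.exp ((n:ℝ) * (t^2/2)) := by
    intro t
    rw [ProbabilityTheory.mgf]
    calc ∫ ω, Real.exp (t * S ω) ∂volume
        = ∫ ω : Fin n → X × Bool,
            ∏ i, Real.exp (t * ((if (ω i).2 = true then (1:ℝ) else 0) - q)) := by
          simp_rw [hexp_prod t]
      _ = (∫ z : X × Bool, Real.exp (t * ((if z.2 = true then (1:ℝ) else 0) - q)))^n := by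
          rw [MeasureTheory.integral_fintype_prod_volume_eq_pow (ι := Fin n)
            (fun z : X × Bool => Real.exp (t * ((if z.2 = true then (1:ℝ) else 0) - q)))]
          simp
      _ ≤ (Real.exp (t^2/2))^n := by
          apply pow_le_pow_left₀
          · exact integral_nonneg fun z => (Real.exp_pos _).le
          · rw [show (volume : Measure (X × Bool)) = binMeasure q Fp Fm from rfl,
              aux_binMeasure_integral hq0 hq1 t Fp Fm]
            exact aux_bernoulli_mgf q t hq0 hq1
      _ = Real.exp ((n:ℝ) * (t^2/2)) := by rw [← Real.exp_nat_mul]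
  have hup : (volume {ω : Fin n → X × Bool | (n:ℝ)*a ≤ S ω}).toReal
      ≤ Real.exp (-((n:ℝ)*a^2)/2) := by
    calc (volume {ω : Fin n → X × Bool | (n:ℝ)*a ≤ S ω}).toReal
        ≤ Real.exp (-a * ((n:ℝ)*a)) * ProbabilityTheory.mgf S volume a :=
          ProbabilityTheory.measure_ge_le_exp_mul_mgf ((n:ℝ)*a) ha (h_int a)
      _ ≤ Real.exp (-a * ((n:ℝ)*a)) * Real.exp ((n:ℝ) * (a^2/2)) :=
          mul_le_mul_of_nonneg_left (hmgf a) (Real.exp_pos _).le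
      _ = Real.exp (-((n:ℝ)*a^2)/2) := by rw [← Real.exp_add]; ring_nf
  have hlo : (volume {ω : Fin n → X × Bool | S ω ≤ -((n:ℝ)*a)}).toReal
      ≤ Real.exp (-((n:ℝ)*a^2)/2) := by
    calc (volume {ω : Fin n → X × Bool | S ω ≤ -((n:ℝ)*a)}).toReal
        ≤ Real.exp (-(-a) * (-((n:ℝ)*a))) * ProbabilityTheory.mgf S volume (-a) :=
          ProbabilityTheory.measure_le_le_exp_mul_mgf (-((n:ℝ)*a)) (by linarith) (h_int (-a))
      _ ≤ Real.exp (-(-a) * (-((n:ℝ)*a))) * Real.exp ((n:ℝ) * ((-a)^2/2)) :=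
          mul_le_mul_of_nonneg_left (hmgf (-a)) (Real.exp_pos _).le
      _ = Real.exp (-((n:ℝ)*a^2)/2) := by rw [← Real.exp_add]; ring_nf
  rw [hvol]
  calc volume ({ω : Fin n → X × Bool | (n:ℝ)*a ≤ S ω} ∪ {ω : Fin n → X × Bool | S ω ≤ -((n:ℝ)*a)})
      ≤ volume {ω : Fin n → X × Bool | (n:ℝ)*a ≤ S ω}
        + volume {ω : Fin n → X × Bool | S ω ≤ -((n:ℝ)*a)} := measure_union_le _ _
    _ ≤ ENNReal.ofReal (Real.exp (-((n:ℝ)*a^2)/2)) + ENNReal.ofReal (Real.exp (-((n:ℝ)*a^2)/2)) := by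
        gcongr
        · exact (ENNReal.le_ofReal_iff_toReal_le (measure_ne_top _ _) (Real.exp_pos _).le).mpr hup
        · exact (ENNReal.le_ofReal_iff_toReal_le (measure_ne_top _ _) (Real.exp_pos _).le).mpr hlo
    _ = ENNReal.ofReal (2 * Real.exp (-((n:ℝ)*a^2)/2)) := by
        rw [← ENNReal.ofReal_add (Real.exp_pos _).le (Real.exp_pos _).le]; ring_nf

lemma aux_nPos_eq {X : Type*} {n : ℕ} (ω : Fin n → X × Bool) :
    ((nPos ω : ℝ)) = ∑ i, (if (ω i).2 = true then (1:ℝ) else 0) := by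
  rw [nPos, Finset.card_filter]
  push_cast
  rfl


set_option maxHeartbeats 1000000 in
/-- Lemma 2: uniform control of the deviation between the plug-in
weighted empirical risk and the ideally weighted empirical risk, for binary
classification with varying class probabilities. -/
theorem plugin_vs_ideal_weighted_risk_binary
    {X : Type*} [MeasurableSpace X]
    (p p' : ℝ) (hp : p ∈ Set.Ioo (0:ℝ) 1) (hp' : p' ∈ Set.Ioo (0:ℝ) 1)
    (Fp Fm : Measure X) [IsProbabilityMeasure Fp] [IsProbabilityMeasure Fm]
    (ε : ℝ) (hε : ε ∈ Set.Ioo (0:ℝ) (1/2)) (hp'ε : p' ∈ Set.Ioo ε (1 - ε))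
    (n : ℕ) (δ : ℝ) (hδ : δ ∈ Set.Ioo (0:ℝ) 1)
    (hn : 2 * Real.log (2 / δ) / ε ^ 2 ≤ (n : ℝ)) :
    ENNReal.ofReal (1 - δ) ≤
      (Measure.pi fun _ : Fin n => binMeasure p' Fp Fm)
        {ω | (0 < nPos ω ∧ nPos ω < n) ∧
          ∀ g : X → Bool, Measurable g →
            |((p / (nPos ω : ℝ)) * posErr ω g +
                ((1 - p) / ((n : ℝ) - (nPos ω : ℝ))) * negErr ω g) -
              ((p / p') * (1 / (n : ℝ)) * posErr ω g +
                ((1 - p) / (1 - p')) * (1 / (n : ℝ)) * negErr ω g)| ≤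
            (2 / ε ^ 2) * Real.sqrt (Real.log (2 / δ) / (2 * n))} := by
  obtain ⟨hp0, hp1⟩ := hp
  obtain ⟨hq0, hq1⟩ := hp'
  obtain ⟨hε0, hε2⟩ := hε
  obtain ⟨hεq, hqε⟩ := hp'ε
  obtain ⟨hδ0, hδ1⟩ := hδ
  have hL : 0 < Real.log (2 / δ) := Real.log_pos (by rw [lt_div_iff₀ hδ0]; linarith)
  set L := Real.log (2 / δ) with hLdef
  have hn0 : 0 < (n : ℝ) := lt_of_lt_of_le (by positivity) hn
  set a := Real.sqrt (2 * L / n) with ha_def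
  have ha0 : 0 ≤ a := Real.sqrt_nonneg _
  have ha2 : a ^ 2 = 2 * L / n := Real.sq_sqrt (by positivity)
  have haε : a ≤ ε := by
    rw [ha_def, show ε = Real.sqrt (ε ^ 2) from (Real.sqrt_sq hε0.le).symm]
    apply Real.sqrt_le_sqrt
    rw [div_le_iff₀ hn0]
    exact le_of_le_of_eq ((div_le_iff₀ (by positivity)).mp hn) (mul_comm _ _)
  have hsqrt_half : Real.sqrt (L / (2 * n)) = a / 2 := by
    have h4 : L / (2 * ↑n) = (a / 2) ^ 2 := by rw [div_pow, ha2]; ring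
    rw [h4, Real.sqrt_sq (by positivity)]
  -- the bad event
  set S : (Fin n → X × Bool) → ℝ :=
    fun ω => ∑ i, ((if (ω i).2 = true then (1:ℝ) else 0) - p') with hS
  have hSmeas : Measurable S := by
    apply Finset.measurable_sum
    intro i _
    exact (((measurable_of_countable (fun b : Bool => if b = true then (1:ℝ) else 0)).comp
      (measurable_snd.comp (measurable_pi_apply i)))).sub measurable_const
  have hS_eq : ∀ ω : Fin n → X × Bool, S ω = (nPos ω : ℝ) - n * p' := by
    intro ω
    show (∑ i, ((if (ω i).2 = true then (1:ℝ) else 0) - p')) = (nPos ω : ℝ) - n * p'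
    rw [Finset.sum_sub_distrib, ← aux_nPos_eq ω, Finset.sum_const, Finset.card_univ,
      Fintype.card_fin, nsmul_eq_mul]
  set bad : Set (Fin n → X × Bool) :=
    {ω | (n:ℝ) * a ≤ S ω} ∪ {ω | S ω ≤ -((n:ℝ) * a)} with hbad_def
  have hbad_meas : MeasurableSet bad :=
    (measurableSet_le measurable_const hSmeas).union (measurableSet_le hSmeas measurable_const)
  have hbad_le : (Measure.pi fun _ : Fin n => binMeasure p' Fp Fm) bad ≤ ENNReal.ofReal δ := by
    refine le_trans (aux_chernoff hq0.le hq1.le Fp Fm n a ha0) ?_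
    apply ENNReal.ofReal_le_ofReal
    have hexp : -((n:ℝ) * a ^ 2) / 2 = -L := by
      rw [ha2]; field_simp
    rw [hexp, hLdef, ← Real.log_inv, Real.exp_log (by positivity), inv_div]
    linarith
  haveI : IsProbabilityMeasure (binMeasure p' Fp Fm) := aux_binMeasure_prob hq0.le hq1.le Fp Fm
  haveI : IsProbabilityMeasure (Measure.pi fun _ : Fin n => binMeasure p' Fp Fm) := by
    infer_instance
  -- inclusion of the complement of bad in the event
  have hsub : badᶜ ⊆ {ω : Fin n → X × Bool | (0 < nPos ω ∧ nPos ω < n) ∧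
      ∀ g : X → Bool, Measurable g →
        |((p / (nPos ω : ℝ)) * posErr ω g +
            ((1 - p) / ((n : ℝ) - (nPos ω : ℝ))) * negErr ω g) -
          ((p / p') * (1 / (n : ℝ)) * posErr ω g +
            ((1 - p) / (1 - p')) * (1 / (n : ℝ)) * negErr ω g)| ≤
        (2 / ε ^ 2) * Real.sqrt (L / (2 * n))} := by
    intro ω hω
    rw [hbad_def, Set.compl_union, Set.mem_inter_iff, Set.mem_compl_iff, Set.mem_compl_iff,
      Set.mem_setOf_eq, Set.mem_setOf_eq, not_le, not_le] at hω
    obtain ⟨hω1, hω2⟩ := hω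
    set m : ℝ := (nPos ω : ℝ) with hm_def
    have hdev : |m - (n:ℝ) * p'| ≤ (n:ℝ) * a := by
      rw [← hS_eq ω, abs_le]; constructor <;> linarith
    have hm_low : (n:ℝ) * p' - (n:ℝ) * a ≤ m := by
      have := (abs_le.mp hdev).1; linarith
    have hm_high : m ≤ (n:ℝ) * p' + (n:ℝ) * a := by
      have := (abs_le.mp hdev).2; linarith
    have hm0 : 0 < m := by nlinarith [mul_pos hn0 (show 0 < p' - a by linarith)]
    have hmn : m < (n:ℝ) := by nlinarith [mul_pos hn0 (show 0 < 1 - p' - a by linarith)]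
    have hnPos0 : 0 < nPos ω := by
      have h := hm0; rw [hm_def] at h; exact_mod_cast h
    have hnPosn : nPos ω < n := by
      have h := hmn; rw [hm_def] at h; exact_mod_cast h
    refine ⟨⟨hnPos0, hnPosn⟩, ?_⟩
    intro g _
    rw [hsqrt_half]
    set P := posErr ω g with hP_def
    set N := negErr ω g with hN_def
    have hP0 : 0 ≤ P := Finset.sum_nonneg fun i _ => by positivity
    have hN0 : 0 ≤ N := Finset.sum_nonneg fun i _ => by positivity
    have hPm : P ≤ m := by
      rw [hP_def, posErr, hm_def, aux_nPos_eq ω]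
      apply Finset.sum_le_sum
      intro i _
      split_ifs with h1 h2
      · norm_num
      · exact absurd h1.1 h2
      · norm_num
      · norm_num
    have hNs : N ≤ (n:ℝ) - m := by
      have hsum : (∑ i, (if (ω i).2 = true then (1:ℝ) else 0))
          + (∑ i, (if (ω i).2 = false then (1:ℝ) else 0)) = (n:ℝ) := by
        rw [← Finset.sum_add_distrib]
        have : ∀ i : Fin n, (if (ω i).2 = true then (1:ℝ) else 0)
            + (if (ω i).2 = false then (1:ℝ) else 0) = 1 := by
          intro i; cases h : (ω i).2 <;> simp [h]
        simp_rw [this]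
        rw [Finset.sum_const, Finset.card_univ, Fintype.card_fin, nsmul_eq_mul, mul_one]
      have hNle : N ≤ ∑ i, (if (ω i).2 = false then (1:ℝ) else 0) := by
        rw [hN_def, negErr]
        apply Finset.sum_le_sum
        intro i _
        split_ifs with h1 h2
        · norm_num
        · exact absurd h1.1 h2
        · norm_num
        · norm_num
      rw [hm_def, aux_nPos_eq ω]
      linarith
    -- abbreviations
    have hq'0 : 0 < 1 - p' := by linarith
    have hs0 : 0 < (n:ℝ) - m := by linarith
    have hqn0 : 0 < p' * (n:ℝ) := by positivity
    have hq'n0 : 0 < (1 - p') * (n:ℝ) := by positivity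
    have hD : (p / m * P + (1 - p) / ((n:ℝ) - m) * N)
        - (p / p' * (1 / (n:ℝ)) * P + (1 - p) / (1 - p') * (1 / (n:ℝ)) * N)
        = P * (p / m - p / (p' * (n:ℝ))) + N * ((1 - p) / ((n:ℝ) - m) - (1 - p) / ((1 - p') * (n:ℝ))) := by
      field_simp
      ring
    have habs1 : |p' * (n:ℝ) - m| ≤ (n:ℝ) * a := by
      rw [abs_sub_comm, mul_comm p']; exact hdev
    have h1 : P * |p / m - p / (p' * (n:ℝ))| ≤ a / ε := by
      have e1 : p / m - p / (p' * (n:ℝ)) = p * (p' * (n:ℝ) - m) / (m * (p' * (n:ℝ))) := by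
        field_simp
      rw [e1, abs_div, abs_mul, abs_of_pos hp0, abs_of_pos (mul_pos hm0 hqn0)]
      calc P * (p * |p' * (n:ℝ) - m| / (m * (p' * (n:ℝ))))
          ≤ m * (1 * ((n:ℝ) * a) / (m * (p' * (n:ℝ)))) := by
            apply mul_le_mul hPm _ (by positivity) hm0.le
            apply div_le_div_of_nonneg_right ?_ (mul_pos hm0 hqn0).le
            exact mul_le_mul hp1.le habs1 (abs_nonneg _) zero_le_one
        _ = a / p' := by field_simp
        _ ≤ a / ε := by apply div_le_div_of_nonneg_left ha0 hε0 hεq.le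
    have h2 : N * |(1 - p) / ((n:ℝ) - m) - (1 - p) / ((1 - p') * (n:ℝ))| ≤ a / ε := by
      have e2 : (1 - p) / ((n:ℝ) - m) - (1 - p) / ((1 - p') * (n:ℝ))
          = (1 - p) * (m - p' * (n:ℝ)) / (((n:ℝ) - m) * ((1 - p') * (n:ℝ))) := by
        field_simp; ring
      have habs2 : |m - p' * (n:ℝ)| ≤ (n:ℝ) * a := by rw [abs_sub_comm]; exact habs1
      rw [e2, abs_div, abs_mul, abs_of_pos (by linarith : (0:ℝ) < 1 - p),
        abs_of_pos (mul_pos hs0 hq'n0)]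
      calc N * ((1 - p) * |m - p' * (n:ℝ)| / (((n:ℝ) - m) * ((1 - p') * (n:ℝ))))
          ≤ ((n:ℝ) - m) * (1 * ((n:ℝ) * a) / (((n:ℝ) - m) * ((1 - p') * (n:ℝ)))) := by
            apply mul_le_mul hNs _ (div_nonneg (mul_nonneg (by linarith) (abs_nonneg _)) (mul_pos hs0 hq'n0).le) hs0.le
            apply div_le_div_of_nonneg_right ?_ (mul_pos hs0 hq'n0).le
            exact mul_le_mul (by linarith) habs2 (abs_nonneg _) zero_le_one
        _ = a / (1 - p') := by field_simp
        _ ≤ a / ε := by apply div_le_div_of_nonneg_left ha0 hε0 (by linarith)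
    have hfin : a / ε + a / ε ≤ 2 / ε ^ 2 * (a / 2) := by
      rw [← add_div, show 2 / ε ^ 2 * (a / 2) = a / ε ^ 2 by ring]
      rw [div_le_div_iff₀ (by positivity) (by positivity)]
      nlinarith [mul_nonneg ha0 hε0.le]
    calc |(p / m * P + (1 - p) / ((n:ℝ) - m) * N)
        - (p / p' * (1 / (n:ℝ)) * P + (1 - p) / (1 - p') * (1 / (n:ℝ)) * N)|
        = |P * (p / m - p / (p' * (n:ℝ)))
            + N * ((1 - p) / ((n:ℝ) - m) - (1 - p) / ((1 - p') * (n:ℝ)))| := by rw [hD]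
      _ ≤ |P * (p / m - p / (p' * (n:ℝ)))|
            + |N * ((1 - p) / ((n:ℝ) - m) - (1 - p) / ((1 - p') * (n:ℝ)))| := abs_add_le _ _
      _ = P * |p / m - p / (p' * (n:ℝ))|
            + N * |(1 - p) / ((n:ℝ) - m) - (1 - p) / ((1 - p') * (n:ℝ))| := by
          rw [abs_mul, abs_mul, abs_of_nonneg hP0, abs_of_nonneg hN0]
      _ ≤ a / ε + a / ε := add_le_add h1 h2
      _ ≤ 2 / ε ^ 2 * (a / 2) := hfin
  -- conclude
  calc ENNReal.ofReal (1 - δ)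
      = 1 - ENNReal.ofReal δ := by
        rw [ENNReal.ofReal_sub 1 hδ0.le, ENNReal.ofReal_one]
    _ ≤ 1 - (Measure.pi fun _ : Fin n => binMeasure p' Fp Fm) bad :=
        tsub_le_tsub_left hbad_le 1
    _ = (Measure.pi fun _ : Fin n => binMeasure p' Fp Fm) badᶜ := by
        rw [measure_compl hbad_meas (measure_ne_top _ _), measure_univ]
    _ ≤ _ := measure_mono hsub
end

section
/- Positive-unlabeled learning: let p ∈ (0,1), q ∈ (0,1), and let (X'_1,Y'_1),…,(X'_n,Y'_n) be i.i.d. from a distribution P' on X×{−1,+1} with P'{Y' = +1} = q. Set n'_+ = #{i : Y'_i = +1}, n'_− = n − n'_+. For a classifier g define R̃_{w*,n}(g) = (2p/q)(1/n)Σ_{i:Y'_i=+1} 1{g(X'_i)=−1} + (1/(1−q))(1/n)Σ_{i:Y'_i=−1} 1{g(X'_i)=+1} and R̃_{ŵ*,n}(g) = (2p/n'_+)Σ_{i:Y'_i=+1} 1{g(X'_i)=−1} + (1/n'_−)Σ_{i:Y'_i=−1} 1{g(X'_i)=+1}. Let ε ∈ (0,1/2) with q ∈ (ε, 1−ε). Then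 for every δ ∈ (0,1) and every n ≥ 2 log(2/δ)/ε², with probability at least 1−δ: 0 < n'_+ < n and, simultaneously for every measurable classifier g, |R̃_{ŵ*,n}(g) − R̃_{w*,n}(g)| ≤ (2(2p+1)/ε²)√(log(2/δ)/(2n)). -/
open MeasureTheory

/-- Bernoulli mgf bound: sub-gaussian with variance proxy 1. -/
lemma bern_mgf_le {s r : ℝ} (hs : 0 ≤ s) (hr0 : 0 ≤ r) (hr1 : r ≤ 1) :
    r * Real.exp (s * (1 - r)) + (1 - r) * Real.exp (-(s * r)) ≤ Real.exp (s ^ 2 / 2) := by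
  set E := Real.exp (-s) with hE
  have hEs : Real.exp s * E = 1 := by rw [hE, ← Real.exp_add]; simp
  have hE1 : 1 - s ≤ E := by have := Real.add_one_le_exp (-s); linarith
  have hquad : 1 + s + s ^ 2 / 2 ≤ Real.exp s := Real.quadratic_le_exp_of_nonneg hs
  have hEpos : 0 < E := Real.exp_pos _
  -- E ≤ 1 - s + s^2/2
  have hE2 : E ≤ 1 - s + s ^ 2 / 2 := by nlinarith [sq_nonneg (s ^ 2), Real.exp_pos s]
  have key : (1 - r) * (s - 1 + E) ≤ s ^ 2 / 2 := by nlinarith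
  have h7 : r * Real.exp s + (1 - r) = Real.exp s * (1 - (1 - r) * (1 - E)) := by
    linear_combination (r - 1) * hEs
  have h6 : 1 - (1 - r) * (1 - E) ≤ Real.exp (-((1 - r) * (1 - E))) := by
    have := Real.add_one_le_exp (-((1 - r) * (1 - E))); linarith
  calc r * Real.exp (s * (1 - r)) + (1 - r) * Real.exp (-(s * r))
      = Real.exp (-(s * r)) * (r * Real.exp s + (1 - r)) := by
        rw [show s * (1 - r) = s + -(s * r) by ring, Real.exp_add]; ring
    _ ≤ Real.exp (-(s * r)) * (Real.exp s * Real.exp (-((1 - r) * (1 - E)))) := by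
        rw [h7]
        exact mul_le_mul_of_nonneg_left
          (mul_le_mul_of_nonneg_left h6 (Real.exp_pos s).le) (Real.exp_pos _).le
    _ = Real.exp (-(s * r) + s + -((1 - r) * (1 - E))) := by
        rw [Real.exp_add, Real.exp_add]; ring
    _ ≤ Real.exp (s ^ 2 / 2) := by
        apply Real.exp_le_exp.mpr; nlinarith

lemma snd_measurableSet {X : Type*} [MeasurableSpace X] (b : Bool) :
    MeasurableSet {z : X × Bool | z.2 = b} := by
  have : {z : X × Bool | z.2 = b} = Prod.snd ⁻¹' {b} := by ext z; simp
  rw [this]; exact measurable_snd (measurableSet_singleton b)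

lemma integral_coord {X : Type*} [MeasurableSpace X]
    (P' : Measure (X × Bool)) [IsProbabilityMeasure P'] (b : Bool) {r : ℝ}
    (hr0 : 0 ≤ r) (hP : P' {z : X × Bool | z.2 = b} = ENNReal.ofReal r) (c₁ c₂ : ℝ) :
    ∫ z, (if z.2 = b then c₁ else c₂) ∂P' = r * c₁ + (1 - r) * c₂ := by
  have hS : MeasurableSet {z : X × Bool | z.2 = b} := snd_measurableSet b
  have hfun : ∀ z : X × Bool, (if z.2 = b then c₁ else c₂)
      = {z : X × Bool | z.2 = b}.indicator (fun _ => c₁ - c₂) z + c₂ := by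
    intro z; by_cases h : z.2 = b <;> simp [Set.indicator, h]
  rw [integral_congr_ae (Filter.Eventually.of_forall hfun), integral_add
    ((integrable_const (c₁ - c₂)).indicator hS) (integrable_const c₂),
    integral_indicator hS, setIntegral_const, integral_const]
  simp [measureReal_def, hP, ENNReal.toReal_ofReal hr0]
  ring
lemma summand_measurable {X : Type*} [MeasurableSpace X] (n : ℕ) (b : Bool) (r : ℝ) (i : Fin n) :
    Measurable fun ω : Fin n → X × Bool => ((if (ω i).2 = b then (1:ℝ) else 0) - r) := by
  have h1 : Measurable fun y : Bool => ((if y = b then (1:ℝ) else 0) - r) := by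
    exact measurable_of_countable _
  exact h1.comp (measurable_snd.comp (measurable_pi_apply i))

lemma chernoff_tail {X : Type*} [MeasurableSpace X]
    (P' : Measure (X × Bool)) [IsProbabilityMeasure P'] (b : Bool) {r s : ℝ}
    (hr0 : 0 ≤ r) (hr1 : r ≤ 1) (hs : 0 ≤ s) (n : ℕ)
    (hP : P' {z : X × Bool | z.2 = b} = ENNReal.ofReal r) :
    (Measure.pi fun _ : Fin n => P')
      {ω : Fin n → X × Bool | (n:ℝ) * s ≤ ∑ i, ((if (ω i).2 = b then (1:ℝ) else 0) - r)} ≤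
    ENNReal.ofReal (Real.exp (-((n:ℝ) * s ^ 2 / 2))) := by
  set μ := Measure.pi fun _ : Fin n => P' with hμdef
  haveI : IsProbabilityMeasure μ := by
    rw [hμdef]; infer_instance
  set Y : (Fin n → X × Bool) → ℝ :=
    fun ω => ∑ i, ((if (ω i).2 = b then (1:ℝ) else 0) - r) with hY
  have hYmeas : Measurable Y :=
    Finset.measurable_sum _ fun i _ => summand_measurable n b r i
  have hYle : ∀ ω, Y ω ≤ (n:ℝ) := by
    intro ω
    calc Y ω ≤ ∑ _i : Fin n, (1:ℝ) := by
          refine Finset.sum_le_sum fun i _ => ?_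
          split_ifs <;> nlinarith
      _ = (n:ℝ) := by simp
  have hint : Integrable (fun ω => Real.exp (s * Y ω)) μ := by
    refine (integrable_const (Real.exp (s * n))).mono'
      (Real.measurable_exp.comp (measurable_const.mul hYmeas)).aestronglyMeasurable ?_
    refine Filter.Eventually.of_forall fun ω => ?_
    rw [Real.norm_eq_abs, abs_of_pos (Real.exp_pos _), Real.exp_le_exp]
    exact mul_le_mul_of_nonneg_left (hYle ω) hs
  have hcher := ProbabilityTheory.measure_ge_le_exp_mul_mgf (μ := μ) (X := Y) ((n:ℝ) * s) hs hint
  have hmgf : ProbabilityTheory.mgf Y μ s ≤ Real.exp ((n:ℝ) * (s ^ 2 / 2)) := by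
    have h1 : ProbabilityTheory.mgf Y μ s
        = ∫ ω, ∏ i, Real.exp (s * ((if (ω i).2 = b then (1:ℝ) else 0) - r)) ∂μ := by
      rw [ProbabilityTheory.mgf]
      congr 1; ext ω
      simp only
      rw [Finset.mul_sum, Real.exp_sum]
    letI : MeasureSpace (X × Bool) := ⟨P'⟩
    have hμvol : μ = (volume : Measure (Fin n → X × Bool)) := rfl
    have h2 : ∫ ω, ∏ i, Real.exp (s * ((if (ω i).2 = b then (1:ℝ) else 0) - r)) ∂μ
        = (∫ z : X × Bool, Real.exp (s * ((if z.2 = b then (1:ℝ) else 0) - r)))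
          ^ (Fintype.card (Fin n)) := by
      rw [hμvol]
      exact MeasureTheory.integral_fintype_prod_volume_eq_pow (ι := Fin n)
        (fun z : X × Bool => Real.exp (s * ((if z.2 = b then (1:ℝ) else 0) - r)))
    have h3 : (∫ z : X × Bool, Real.exp (s * ((if z.2 = b then (1:ℝ) else 0) - r)) ∂P')
        = r * Real.exp (s * (1 - r)) + (1 - r) * Real.exp (-(s * r)) := by
      rw [show (fun z : X × Bool => Real.exp (s * ((if z.2 = b then (1:ℝ) else 0) - r)))
          = fun z : X × Bool =>
            (if z.2 = b then Real.exp (s * (1 - r)) else Real.exp (-(s * r))) from ?_]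
      · exact integral_coord P' b hr0 hP _ _
      · ext z; by_cases h : z.2 = b <;> simp [h] <;> ring_nf
    have h4 : (∫ z : X × Bool, Real.exp (s * ((if z.2 = b then (1:ℝ) else 0) - r)))
        = r * Real.exp (s * (1 - r)) + (1 - r) * Real.exp (-(s * r)) := h3
    rw [h1, h2, h4, Fintype.card_fin]
    calc (r * Real.exp (s * (1 - r)) + (1 - r) * Real.exp (-(s * r))) ^ n
        ≤ (Real.exp (s ^ 2 / 2)) ^ n := by
          apply pow_le_pow_left₀ ?_ (bern_mgf_le hs hr0 hr1)
          have e1 := (Real.exp_pos (s * (1 - r))).le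
          have e2 := (Real.exp_pos (-(s * r))).le
          nlinarith
      _ = Real.exp ((n:ℝ) * (s ^ 2 / 2)) := by
          rw [← Real.exp_nat_mul]
  have hfinal : (μ {ω | (n:ℝ) * s ≤ Y ω}).toReal ≤ Real.exp (-((n:ℝ) * s ^ 2 / 2)) := by
    calc (μ {ω | (n:ℝ) * s ≤ Y ω}).toReal
        ≤ Real.exp (-s * ((n:ℝ) * s)) * ProbabilityTheory.mgf Y μ s := hcher
      _ ≤ Real.exp (-s * ((n:ℝ) * s)) * Real.exp ((n:ℝ) * (s ^ 2 / 2)) :=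
          mul_le_mul_of_nonneg_left hmgf (Real.exp_pos _).le
      _ = Real.exp (-((n:ℝ) * s ^ 2 / 2)) := by rw [← Real.exp_add]; ring_nf
  have hne : μ {ω | (n:ℝ) * s ≤ Y ω} ≠ ⊤ := measure_ne_top _ _
  calc μ {ω | (n:ℝ) * s ≤ Y ω} = ENNReal.ofReal (μ {ω | (n:ℝ) * s ≤ Y ω}).toReal :=
        (ENNReal.ofReal_toReal hne).symm
    _ ≤ ENNReal.ofReal (Real.exp (-((n:ℝ) * s ^ 2 / 2))) := ENNReal.ofReal_le_ofReal hfinal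

lemma deviation_bound {p q ε s nn m A B t : ℝ}
    (hp0 : 0 < p) (hε0 : 0 < ε) (hq0 : 0 < q) (h1q : 0 < 1 - q)
    (hqε1 : ε ≤ q) (hqε2 : ε ≤ 1 - q) (hε1 : ε ≤ 1)
    (hm_pos : 0 < m) (hnm : 0 < nn - m) (hnn : 0 < nn)
    (hA0 : 0 ≤ A) (hAm : A ≤ m) (hB0 : 0 ≤ B) (hBnm : B ≤ nn - m)
    (habs : |q * nn - m| ≤ nn * s) (hs0 : 0 ≤ s)
    (hst : s = 2 * t) (ht0 : 0 ≤ t) :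
    |(2 * p / m) * A + (1 / (nn - m)) * B -
      ((2 * p / q) * (1 / nn) * A + (1 / (1 - q)) * (1 / nn) * B)|
      ≤ (2 * (2 * p + 1) / ε ^ 2) * t := by
  have key1 : |A * (2 * p / m - 2 * p / (q * nn))| ≤ 2 * p * s / ε := by
    rw [abs_mul, abs_of_nonneg hA0]
    have hc1 : 2 * p / m - 2 * p / (q * nn) = 2 * p * (q * nn - m) / (m * (q * nn)) := by
      field_simp
    rw [hc1, abs_div, abs_of_pos (show (0:ℝ) < m * (q * nn) by positivity), abs_mul,
      abs_of_pos (show (0:ℝ) < 2 * p by linarith)]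
    calc A * (2 * p * |q * nn - m| / (m * (q * nn)))
        ≤ m * (2 * p * (nn * s) / (m * (q * nn))) := by
          apply mul_le_mul hAm ?_ (by positivity) hm_pos.le
          gcongr
      _ = 2 * p * s / q := by field_simp
      _ ≤ 2 * p * s / ε := by
          gcongr
  have key2 : |B * (1 / (nn - m) - 1 / ((1 - q) * nn))| ≤ s / ε := by
    rw [abs_mul, abs_of_nonneg hB0]
    have hc2 : 1 / (nn - m) - 1 / ((1 - q) * nn)
        = (m - q * nn) / ((nn - m) * ((1 - q) * nn)) := by
      field_simp
      ring
    rw [hc2, abs_div, abs_of_pos (show (0:ℝ) < (nn - m) * ((1 - q) * nn) by positivity)]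
    calc B * (|m - q * nn| / ((nn - m) * ((1 - q) * nn)))
        ≤ (nn - m) * ((nn * s) / ((nn - m) * ((1 - q) * nn))) := by
          apply mul_le_mul hBnm ?_ (by positivity) hnm.le
          gcongr
          rw [abs_sub_comm]
          exact habs
      _ = s / (1 - q) := by field_simp
      _ ≤ s / ε := by
          gcongr
  have hre : (2 * p / m) * A + (1 / (nn - m)) * B -
      ((2 * p / q) * (1 / nn) * A + (1 / (1 - q)) * (1 / nn) * B)
      = A * (2 * p / m - 2 * p / (q * nn)) + B * (1 / (nn - m) - 1 / ((1 - q) * nn)) := by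
    field_simp
    ring
  rw [hre]
  calc |A * (2 * p / m - 2 * p / (q * nn)) + B * (1 / (nn - m) - 1 / ((1 - q) * nn))|
      ≤ |A * (2 * p / m - 2 * p / (q * nn))| + |B * (1 / (nn - m) - 1 / ((1 - q) * nn))| :=
        abs_add_le _ _
    _ ≤ 2 * p * s / ε + s / ε := add_le_add key1 key2
    _ = (2 * p + 1) * s / ε := by ring
    _ ≤ (2 * (2 * p + 1) / ε ^ 2) * t := by
        rw [hst, div_mul_eq_mul_div, div_le_div_iff₀ hε0 (by positivity)]
        have hε2 : ε ^ 2 ≤ ε := by nlinarith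
        nlinarith [mul_le_mul_of_nonneg_left hε2 (show (0:ℝ) ≤ (2 * p + 1) * (2 * t) by positivity)]

/-- Lemma 4: uniform control of the deviation between the plug-in
PU weighted empirical risk and the ideally weighted one, when the training
distribution `P'` on `X × {-1,+1}` has positive-label probability `q`. -/
theorem plugin_vs_ideal_weighted_risk_pu
    {X : Type*} [MeasurableSpace X]
    (p q : ℝ) (hp : p ∈ Set.Ioo (0:ℝ) 1) (hq : q ∈ Set.Ioo (0:ℝ) 1)
    (P' : Measure (X × Bool)) [IsProbabilityMeasure P']
    (hP'q : P' {z : X × Bool | z.2 = true} = ENNReal.ofReal q)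
    (ε : ℝ) (hε : ε ∈ Set.Ioo (0:ℝ) (1/2)) (hqε : q ∈ Set.Ioo ε (1 - ε))
    (n : ℕ) (δ : ℝ) (hδ : δ ∈ Set.Ioo (0:ℝ) 1)
    (hn : 2 * Real.log (2 / δ) / ε ^ 2 ≤ (n : ℝ)) :
    ENNReal.ofReal (1 - δ) ≤
      (Measure.pi fun _ : Fin n => P')
        {ω | (0 < nPos ω ∧ nPos ω < n) ∧
          ∀ g : X → Bool, Measurable g →
            |((2 * p / (nPos ω : ℝ)) * posErr ω g +
                (1 / ((n : ℝ) - (nPos ω : ℝ))) * negErr ω g) -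
              ((2 * p / q) * (1 / (n : ℝ)) * posErr ω g +
                (1 / (1 - q)) * (1 / (n : ℝ)) * negErr ω g)| ≤
            (2 * (2 * p + 1) / ε ^ 2) * Real.sqrt (Real.log (2 / δ) / (2 * n))} := by
  obtain ⟨hε0, hε12⟩ := hε
  obtain ⟨hq0, hq1⟩ := hq
  obtain ⟨hqε1, hqε2⟩ := hqε
  obtain ⟨hδ0, hδ1⟩ := hδ
  obtain ⟨hp0, hp1⟩ := hp
  set μ := Measure.pi fun _ : Fin n => P' with hμdef
  haveI : IsProbabilityMeasure μ := by rw [hμdef]; infer_instance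
  set L := Real.log (2 / δ) with hLdef
  have hL : 0 < L := Real.log_pos (by rw [lt_div_iff₀ hδ0]; linarith)
  have hnR : 0 < (n : ℝ) := lt_of_lt_of_le (by positivity) hn
  have hn0 : 0 < n := by exact_mod_cast hnR
  set s := Real.sqrt (2 * L / n) with hsdef
  have hs0 : 0 ≤ s := Real.sqrt_nonneg _
  have hs2 : s ^ 2 = 2 * L / n := Real.sq_sqrt (by positivity)
  have hns2 : (n : ℝ) * s ^ 2 = 2 * L := by rw [hs2]; field_simp
  have h2L : 2 * L ≤ (n : ℝ) * ε ^ 2 := by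
    rw [div_le_iff₀ (by positivity)] at hn; linarith
  have hsε : s ≤ ε := by
    have h1 : s ^ 2 ≤ ε ^ 2 := by
      rw [hs2, div_le_iff₀ hnR]; nlinarith
    have h2 := Real.sqrt_le_sqrt h1
    rwa [Real.sqrt_sq hs0, Real.sqrt_sq hε0.le] at h2
  have hexp : Real.exp (-((n : ℝ) * s ^ 2 / 2)) = δ / 2 := by
    rw [hns2, show -(2 * L / 2) = -L by ring, Real.exp_neg, hLdef,
      Real.exp_log (by positivity), inv_div]
  have hPfalse : P' {z : X × Bool | z.2 = false} = ENNReal.ofReal (1 - q) := by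
    have hc : {z : X × Bool | z.2 = false} = {z : X × Bool | z.2 = true}ᶜ := by
      ext z; simp
    rw [hc, measure_compl (snd_measurableSet true) (measure_ne_top _ _), measure_univ, hP'q,
      ENNReal.ofReal_sub _ hq0.le, ENNReal.ofReal_one]
  set B₁ := {ω : Fin n → X × Bool |
    (n:ℝ) * s ≤ ∑ i, ((if (ω i).2 = true then (1:ℝ) else 0) - q)} with hB₁def
  set B₂ := {ω : Fin n → X × Bool |
    (n:ℝ) * s ≤ ∑ i, ((if (ω i).2 = false then (1:ℝ) else 0) - (1 - q))} with hB₂def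
  have hB1 : μ B₁ ≤ ENNReal.ofReal (δ / 2) := by
    have := chernoff_tail P' true hq0.le hq1.le hs0 n hP'q
    rwa [hexp] at this
  have hB2 : μ B₂ ≤ ENNReal.ofReal (δ / 2) := by
    have := chernoff_tail P' false (by linarith) (by linarith) hs0 n hPfalse
    rwa [hexp] at this
  have hBmeas : MeasurableSet (B₁ ∪ B₂) := by
    refine MeasurableSet.union ?_ ?_ <;>
      exact measurableSet_le measurable_const
        (Finset.measurable_sum _ fun i _ => summand_measurable n _ _ i)
  have hB : μ (B₁ ∪ B₂) ≤ ENNReal.ofReal δ := by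
    refine le_trans (measure_union_le _ _) (le_trans (add_le_add hB1 hB2) ?_)
    rw [← ENNReal.ofReal_add (by linarith) (by linarith)]
    norm_num
  have hcompl : ENNReal.ofReal (1 - δ) ≤ μ ((B₁ ∪ B₂)ᶜ) := by
    rw [prob_compl_eq_one_sub hBmeas]
    calc ENNReal.ofReal (1 - δ) = 1 - ENNReal.ofReal δ := by
          rw [ENNReal.ofReal_sub _ hδ0.le, ENNReal.ofReal_one]
      _ ≤ 1 - μ (B₁ ∪ B₂) := tsub_le_tsub_left hB 1
  refine le_trans hcompl (measure_mono ?_)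
  intro ω hω
  simp only [Set.mem_compl_iff, Set.mem_union, hB₁def, hB₂def, Set.mem_setOf_eq, not_or,
    not_le] at hω
  obtain ⟨hω1, hω2⟩ := hω
  simp only [Set.mem_setOf_eq]
  -- basic sums
  have hmR : (nPos ω : ℝ) = ∑ i, (if (ω i).2 = true then (1:ℝ) else 0) := by
    rw [nPos, Finset.card_filter]
    push_cast
    rfl
  set m := (nPos ω : ℝ) with hmdef
  have hsum_true : ∑ i, ((if (ω i).2 = true then (1:ℝ) else 0) - q) = m - n * q := by
    rw [Finset.sum_sub_distrib, Finset.sum_const, Finset.card_univ, Fintype.card_fin,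
      nsmul_eq_mul, hmR]
  have hfalse_pt : ∀ i, (if (ω i).2 = false then (1:ℝ) else 0)
      = 1 - (if (ω i).2 = true then (1:ℝ) else 0) := by
    intro i; cases h : (ω i).2 <;> simp
  have hsum_false : ∑ i, (if (ω i).2 = false then (1:ℝ) else 0) = n - m := by
    rw [Finset.sum_congr rfl fun i _ => hfalse_pt i, Finset.sum_sub_distrib,
      Finset.sum_const, Finset.card_univ, Fintype.card_fin, nsmul_eq_mul, hmR, mul_one]
  have hsum_false' : ∑ i, ((if (ω i).2 = false then (1:ℝ) else 0) - (1 - q))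
      = n * q - m := by
    rw [Finset.sum_sub_distrib, hsum_false, Finset.sum_const, Finset.card_univ,
      Fintype.card_fin, nsmul_eq_mul]
    ring
  rw [hsum_true] at hω1
  rw [hsum_false'] at hω2
  -- positivity of counts
  have hm_pos : 0 < m := by nlinarith
  have hm_lt : m < n := by nlinarith
  constructor
  · constructor
    · have h := hm_pos; rw [hmdef] at h; exact_mod_cast h
    · have h := hm_lt; rw [hmdef] at h; exact_mod_cast h
  intro g _
  have hA0 : 0 ≤ posErr ω g := Finset.sum_nonneg fun i _ => by split_ifs <;> norm_num
  have hB0 : 0 ≤ negErr ω g := Finset.sum_nonneg fun i _ => by split_ifs <;> norm_num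
  have hAm : posErr ω g ≤ m := by
    rw [posErr, hmR]
    refine Finset.sum_le_sum fun i _ => ?_
    by_cases h : (ω i).2 = true <;> simp [h] <;> split_ifs <;> norm_num
  have hBnm : negErr ω g ≤ (n : ℝ) - m := by
    rw [negErr, ← hsum_false]
    refine Finset.sum_le_sum fun i _ => ?_
    by_cases h : (ω i).2 = false <;> simp [h] <;> split_ifs <;> norm_num
  have ht0 : (0:ℝ) ≤ Real.sqrt (L / (2 * n)) := Real.sqrt_nonneg _
  have hst : s = 2 * Real.sqrt (L / (2 * n)) := by
    rw [hsdef, show 2 * L / (n:ℝ) = 2 ^ 2 * (L / (2 * n)) by field_simp,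
      Real.sqrt_mul (by positivity), Real.sqrt_sq (by norm_num)]
  have habs : |q * (n:ℝ) - m| ≤ (n:ℝ) * s := by
    rw [abs_le]; constructor <;> linarith
  exact deviation_bound hp0 hε0 hq0 (by linarith) hqε1.le (by linarith) (by linarith)
    hm_pos (by linarith) hnR hA0 hAm hB0 hBnm habs hs0 hst ht0
end

section
/- Positive-unlabeled learning: let X be a measurable space, p ∈ (0,1), q ∈ (0,1), F_+, F_− probability measures on X, and F = p F_+ + (1−p) F_− (so that F_+ ≪ F). Define P and P' on X×{−1,+1} by P(A×{+1}) = p F_+(A), P(A×{−1}) = (1−p) F_−(A), P'(A×{+1}) = q F_+(A), P'(A×{−1}) = (1−q) F(A). Then P is absolutely continuous with respect to P' and, for P'-almost every (x,y), (dP/dP')(x,y) = (p/q) 1{y=+1} + (1/(1−q)) 1{y=−1} − (p/(1−q)) (dF_+/dF)(x) 1{y=−1}. -/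
open MeasureTheory
open scoped ENNReal

lemma withDensity_map_embedding {α β : Type*} [MeasurableSpace α] [MeasurableSpace β]
    {ι : α → β} (hι : MeasurableEmbedding ι) (μ : Measure α) {f : β → ℝ≥0∞}
    (hf : Measurable f) :
    (μ.map ι).withDensity f = (μ.withDensity (f ∘ ι)).map ι := by
  ext s hs
  rw [withDensity_apply _ hs, hι.map_apply, withDensity_apply _ (hι.measurable hs),
    Measure.restrict_map hι.measurable hs, lintegral_map hf hι.measurable]
  rfl


/-- in the PU problem, with test distribution `P = (p, F₊, F₋)`
and training distribution `P' = (q, F₊, F)` where `F = p F₊ + (1-p) F₋`, one has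
`P ≪ P'` and `dP/dP'(x,y) = (p/q)1{y=+1} + (1/(1-q))1{y=-1}
- (p/(1-q))(dF₊/dF)(x)1{y=-1}` for `P'`-a.e. `(x,y)`. -/
theorem rnDeriv_pu_learning
    {X : Type*} [MeasurableSpace X]
    (p q : ℝ) (hp : p ∈ Set.Ioo (0:ℝ) 1) (hq : q ∈ Set.Ioo (0:ℝ) 1)
    (Fp Fm : Measure X) [IsProbabilityMeasure Fp] [IsProbabilityMeasure Fm] :
    binMeasure p Fp Fm ≪
        binMeasure q Fp (ENNReal.ofReal p • Fp + ENNReal.ofReal (1 - p) • Fm) ∧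
      ∀ᵐ z : X × Bool
          ∂(binMeasure q Fp (ENNReal.ofReal p • Fp + ENNReal.ofReal (1 - p) • Fm)),
        ((binMeasure p Fp Fm).rnDeriv
            (binMeasure q Fp (ENNReal.ofReal p • Fp + ENNReal.ofReal (1 - p) • Fm))
            z).toReal =
          (p / q) * (if z.2 = true then (1:ℝ) else 0) +
            (1 / (1 - q)) * (if z.2 = false then (1:ℝ) else 0) -
            (p / (1 - q)) *
              ((Fp.rnDeriv (ENNReal.ofReal p • Fp + ENNReal.ofReal (1 - p) • Fm)
                  z.1).toReal) *
              (if z.2 = false then (1:ℝ) else 0) := by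
  obtain ⟨hp0, hp1⟩ := hp
  obtain ⟨hq0, hq1⟩ := hq
  set cp := ENNReal.ofReal p with hcp
  set c1p := ENNReal.ofReal (1 - p) with hc1p
  set cq := ENNReal.ofReal q with hcq
  set c1q := ENNReal.ofReal (1 - q) with hc1q
  have hcp0 : cp ≠ 0 := by simp [hcp, ENNReal.ofReal_eq_zero]; linarith
  have hcpT : cp ≠ ∞ := ENNReal.ofReal_ne_top
  have hc1p0 : c1p ≠ 0 := by simp [hc1p, ENNReal.ofReal_eq_zero]; linarith
  have hcq0 : cq ≠ 0 := by simp [hcq, ENNReal.ofReal_eq_zero]; linarith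
  have hcqT : cq ≠ ∞ := ENNReal.ofReal_ne_top
  have hc1q0 : c1q ≠ 0 := by simp [hc1q, ENNReal.ofReal_eq_zero]; linarith
  have hc1qT : c1q ≠ ∞ := ENNReal.ofReal_ne_top
  set F : Measure X := cp • Fp + c1p • Fm with hF
  haveI : IsFiniteMeasure F := by
    constructor
    rw [hF]
    simp only [Measure.add_apply, Measure.smul_apply, smul_eq_mul, measure_univ, mul_one]
    exact ENNReal.add_lt_top.mpr ⟨hcpT.lt_top, ENNReal.ofReal_ne_top.lt_top⟩
  have hFpF : Fp ≪ F := by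
    refine Measure.AbsolutelyContinuous.mk fun s hs h0 => ?_
    rw [hF] at h0
    simp only [Measure.add_apply, Measure.smul_apply, smul_eq_mul, add_eq_zero,
      mul_eq_zero] at h0
    rcases h0.1 with h | h
    · exact absurd h hcp0
    · exact h
  set g : X → ℝ≥0∞ := Fp.rnDeriv F with hg
  have hgmeas : Measurable g := Measure.measurable_rnDeriv _ _
  -- the candidate density
  set f : X × Bool → ℝ≥0∞ :=
    fun z => if z.2 then cp / cq else c1q⁻¹ * (1 - cp * g z.1) with hf
  have hfmeas : Measurable f := by
    have h1 : Measurable fun z : X × Bool => c1q⁻¹ * (1 - cp * g z.1) :=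
      (measurable_const.mul ((measurable_const.mul (hgmeas.comp measurable_fst)).const_sub 1))
    exact Measurable.ite (measurable_snd (measurableSet_singleton true))
      measurable_const h1
  -- p·g ≤ 1 a.e. F
  have hle : cp • Fp ≤ F := by rw [hF]; exact Measure.le_add_right le_rfl
  have hg_le_one : ∀ᵐ x ∂F, cp * g x ≤ 1 := by
    have h1 := Measure.rnDeriv_le_one_of_le hle
    have h2 := Measure.rnDeriv_smul_left_of_ne_top Fp F hcpT
    filter_upwards [h1, h2] with x hx1 hx2
    calc cp * g x = (cp • Fp).rnDeriv F x := by rw [hx2]; simp; rfl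
      _ ≤ 1 := hx1
  have hg_lt_top : ∀ᵐ x ∂F, g x < ∞ := Measure.rnDeriv_lt_top Fp F
  -- key: F.withDensity (1 - cp·g) = c1p • Fm
  have hkey : F.withDensity (fun x => 1 - cp * g x) = c1p • Fm := by
    ext s hs
    rw [withDensity_apply _ hs]
    have hint : ∫⁻ x in s, cp * g x ∂F = cp * Fp s := by
      rw [lintegral_const_mul _ hgmeas, Measure.setLIntegral_rnDeriv hFpF s]
    have hfin : ∫⁻ x in s, cp * g x ∂F ≠ ∞ := by
      rw [hint]
      exact ENNReal.mul_ne_top hcpT (measure_ne_top Fp s)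
    rw [lintegral_sub (hgmeas.const_mul cp) hfin
      (ae_restrict_of_ae hg_le_one)]
    rw [hint, setLIntegral_one]
    have hFs : F s = cp * Fp s + c1p * Fm s := by
      rw [hF]; simp [Measure.add_apply]
    rw [hFs, ENNReal.add_sub_cancel_left (ENNReal.mul_ne_top hcpT (measure_ne_top Fp s))]
    simp
  -- P = P'.withDensity f
  set ιt : X → X × Bool := fun x => (x, true) with hιt
  set ιf : X → X × Bool := fun x => (x, false) with hιf
  have hembt : MeasurableEmbedding ιt := measurableEmbedding_prod_mk_right true
  have hembf : MeasurableEmbedding ιf := measurableEmbedding_prod_mk_right false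
  have hPP' : binMeasure p Fp Fm = (binMeasure q Fp F).withDensity f := by
    rw [binMeasure, binMeasure, withDensity_add_measure, withDensity_smul_measure,
      withDensity_smul_measure, withDensity_map_embedding hembt Fp hfmeas,
      withDensity_map_embedding hembf F hfmeas]
    have h1 : (f ∘ ιt) = fun _ => cp / cq := by funext x; simp [hf, hιt]
    have h2 : (f ∘ ιf) = fun x => c1q⁻¹ * (1 - cp * g x) := by funext x; simp [hf, hιf]
    rw [h1, h2]
    have h3 : Fp.withDensity (fun _ => cp / cq) = (cp / cq) • Fp := withDensity_const _
    have h4 : F.withDensity (fun x => c1q⁻¹ * (1 - cp * g x))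
        = c1q⁻¹ • (c1p • Fm) := by
      rw [← hkey, ← withDensity_smul _ ((hgmeas.const_mul cp).const_sub 1)]
      rfl
    rw [h3, h4]
    simp only [Measure.map_smul, smul_smul]
    congr 2
    · rw [ENNReal.mul_div_cancel hcq0 hcqT]
    · rw [← mul_assoc, ENNReal.mul_inv_cancel hc1q0 hc1qT, one_mul]
  haveI : IsFiniteMeasure (binMeasure q Fp F) := by
    constructor
    rw [binMeasure]
    simp only [Measure.add_apply, Measure.smul_apply, smul_eq_mul]
    have h1 : (Fp.map ιt) Set.univ < ∞ := by
      rw [Measure.map_apply hembt.measurable MeasurableSet.univ]; simp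
    have h2 : (F.map ιf) Set.univ < ∞ := by
      rw [Measure.map_apply hembf.measurable MeasurableSet.univ]
      exact (measure_ne_top F _).lt_top
    exact ENNReal.add_lt_top.mpr ⟨ENNReal.mul_lt_top hcqT.lt_top h1,
      ENNReal.mul_lt_top hc1qT.lt_top h2⟩
  constructor
  · rw [hPP']
    exact withDensity_absolutelyContinuous _ _
  · have hrn : (binMeasure p Fp Fm).rnDeriv (binMeasure q Fp F) =ᵐ[binMeasure q Fp F] f := by
      rw [hPP']
      exact Measure.rnDeriv_withDensity _ hfmeas
    have hmain : ∀ᵐ z ∂(binMeasure q Fp F),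
        (f z).toReal =
          (p / q) * (if z.2 = true then (1:ℝ) else 0) +
            (1 / (1 - q)) * (if z.2 = false then (1:ℝ) else 0) -
            (p / (1 - q)) * (g z.1).toReal * (if z.2 = false then (1:ℝ) else 0) := by
      rw [binMeasure, ae_add_measure_iff, Measure.ae_ennreal_smul_measure_iff hcq0,
        Measure.ae_ennreal_smul_measure_iff hc1q0, hembt.ae_map_iff, hembf.ae_map_iff]
      constructor
      · filter_upwards with x
        simp only [hf, hιt, if_true]
        rw [ENNReal.toReal_div, hcp, hcq, ENNReal.toReal_ofReal hp0.le,
          ENNReal.toReal_ofReal hq0.le]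
        norm_num
      · filter_upwards [hg_le_one, hg_lt_top] with x hx1 hx2
        simp only [hf, hιf, if_false, Bool.false_eq_true]
        rw [ENNReal.toReal_mul, ENNReal.toReal_inv, hc1q, ENNReal.toReal_ofReal (by linarith),
          ENNReal.toReal_sub_of_le hx1 ENNReal.one_ne_top, ENNReal.toReal_mul, hcp,
          ENNReal.toReal_ofReal hp0.le]
        simp only [ENNReal.toReal_one, if_true]
        field_simp
        ring
    filter_upwards [hrn, hmain] with z h1 h2
    rw [h1, h2]
end

section
/- Positive-unlabeled learning: let X be a measurable space, p ∈ (0,1), q ∈ (0,1), F_+, F_− probability measures on X, and F = p F_+ + (1−p) F_−. Let P on X×{−1,+1} be described by (p, F_+, F_−) and P' by (q, F_+, F), i.e. P(A×{+1}) = p F_+(A), P(A×{−1}) = (1−p) F_−(A), P'(A×{+1}) = q F_+(A), P'(A×{−1}) = (1−q) F(A). Then for every measurable classifier g : X → {−1,+1}, the test misclassification risk satisfies R_P(g) = −p + E_{(X',Y')∼P'}[(2p/q) 1{g(X')=−1, Y'=+1} + (1/(1−q)) 1{g(X')=+1, Y'=−1}], where R_P(g) = P{(x,y) : g(x) ≠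 y}. -/
open MeasureTheory

lemma binMeasure_apply {X : Type*} [MeasurableSpace X]
    (r : ℝ) (Fp Fm : Measure X) {S : Set (X × Bool)} (hS : MeasurableSet S) :
    binMeasure r Fp Fm S =
      ENNReal.ofReal r * Fp ((fun x => (x, true)) ⁻¹' S) +
        ENNReal.ofReal (1 - r) * Fm ((fun x => (x, false)) ⁻¹' S) := by
  simp [binMeasure, Measure.map_apply measurable_prodMk_right hS]

theorem pu_risk_identity
    {X : Type*} [MeasurableSpace X]
    (p q : ℝ) (hp : p ∈ Set.Ioo (0:ℝ) 1) (hq : q ∈ Set.Ioo (0:ℝ) 1)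
    (Fp Fm : Measure X) [IsProbabilityMeasure Fp] [IsProbabilityMeasure Fm]
    (g : X → Bool) (hg : Measurable g) :
    ((binMeasure p Fp Fm) {z : X × Bool | g z.1 ≠ z.2}).toReal =
      -p + ∫ z : X × Bool,
          ((2 * p / q) * (if g z.1 = false ∧ z.2 = true then (1:ℝ) else 0) +
            (1 / (1 - q)) * (if g z.1 = true ∧ z.2 = false then (1:ℝ) else 0))
        ∂(binMeasure q Fp (ENNReal.ofReal p • Fp + ENNReal.ofReal (1 - p) • Fm)) := by
  obtain ⟨hp0, hp1⟩ := hp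
  obtain ⟨hq0, hq1⟩ := hq
  set F : Measure X := ENNReal.ofReal p • Fp + ENNReal.ofReal (1 - p) • Fm with hF
  have hgt : MeasurableSet {x | g x = true} := hg (measurableSet_singleton true)
  have hgf : MeasurableSet {x | g x = false} := hg (measurableSet_singleton false)
  -- measurability of the mismatch set
  have hSeq : {z : X × Bool | g z.1 ≠ z.2} =
      ({x | g x = true} ×ˢ ({false} : Set Bool)) ∪
        ({x | g x = false} ×ˢ ({true} : Set Bool)) := by
    ext ⟨x, b⟩
    cases b <;> simp [Set.mem_prod] <;> cases h : g x <;> simp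
  have hS : MeasurableSet {z : X × Bool | g z.1 ≠ z.2} := by
    rw [hSeq]
    exact (hgt.prod (measurableSet_singleton _)).union
      (hgf.prod (measurableSet_singleton _))
  have hS1eq : {z : X × Bool | g z.1 = false ∧ z.2 = true} =
      ({x | g x = false} ×ˢ ({true} : Set Bool)) := by
    ext ⟨x, b⟩; simp [Set.mem_prod, and_comm]
  have hS2eq : {z : X × Bool | g z.1 = true ∧ z.2 = false} =
      ({x | g x = true} ×ˢ ({false} : Set Bool)) := by
    ext ⟨x, b⟩; simp [Set.mem_prod, and_comm]
  have hS1 : MeasurableSet {z : X × Bool | g z.1 = false ∧ z.2 = true} := by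
    rw [hS1eq]; exact hgf.prod (measurableSet_singleton _)
  have hS2 : MeasurableSet {z : X × Bool | g z.1 = true ∧ z.2 = false} := by
    rw [hS2eq]; exact hgt.prod (measurableSet_singleton _)
  -- finiteness of the training measure
  have hFfin : IsFiniteMeasure (binMeasure q Fp F) := by
    constructor
    rw [binMeasure_apply _ _ _ MeasurableSet.univ]
    simp only [Set.preimage_univ]
    have hFuniv : F Set.univ = ENNReal.ofReal p + ENNReal.ofReal (1 - p) := by
      simp [hF]
    rw [hFuniv]
    exact ENNReal.add_lt_top.2 ⟨ENNReal.mul_lt_top ENNReal.ofReal_lt_top (measure_lt_top _ _),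
      ENNReal.mul_lt_top ENNReal.ofReal_lt_top
        (ENNReal.add_lt_top.2 ⟨ENNReal.ofReal_lt_top, ENNReal.ofReal_lt_top⟩)⟩
  haveI := hFfin
  -- abbreviations for real numbers
  set aF : ℝ := (Fp {x | g x = false}).toReal with haF
  set aT : ℝ := (Fp {x | g x = true}).toReal with haT
  set bT : ℝ := (Fm {x | g x = true}).toReal with hbT
  have hFpfin : ∀ s : Set X, Fp s ≠ ⊤ := fun s => (measure_lt_top Fp s).ne
  have hFmfin : ∀ s : Set X, Fm s ≠ ⊤ := fun s => (measure_lt_top Fm s).ne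
  -- sum of complementary probabilities
  have hsum : aF + aT = 1 := by
    have hdisj : Disjoint {x | g x = false} {x | g x = true} := by
      rw [Set.disjoint_left]; intro x hx hx'
      simp only [Set.mem_setOf_eq] at hx hx'
      rw [hx] at hx'; exact Bool.false_ne_true hx'
    have hunion : {x | g x = false} ∪ {x | g x = true} = Set.univ := by
      ext x; cases h : g x <;> simp [h]
    have := measure_union (μ := Fp) hdisj hgt
    rw [hunion, measure_univ] at this
    rw [haF, haT, ← ENNReal.toReal_add (hFpfin _) (hFpfin _), ← this]
    simp
  -- compute the LHS
  have hLHS : ((binMeasure p Fp Fm) {z : X × Bool | g z.1 ≠ z.2}).toReal =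
      p * aF + (1 - p) * bT := by
    rw [binMeasure_apply _ _ _ hS]
    have h1 : (fun x => (x, true)) ⁻¹' {z : X × Bool | g z.1 ≠ z.2} =
        {x | g x = false} := by
      ext x; cases h : g x <;> simp [h]
    have h2 : (fun x => (x, false)) ⁻¹' {z : X × Bool | g z.1 ≠ z.2} =
        {x | g x = true} := by
      ext x; cases h : g x <;> simp [h]
    rw [h1, h2, ENNReal.toReal_add, ENNReal.toReal_mul, ENNReal.toReal_mul,
      ENNReal.toReal_ofReal hp0.le, ENNReal.toReal_ofReal (by linarith)]
    · exact ENNReal.mul_ne_top ENNReal.ofReal_ne_top (hFpfin _)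
    · exact ENNReal.mul_ne_top ENNReal.ofReal_ne_top (hFmfin _)
  -- compute the integral
  have hint : (∫ z : X × Bool,
          ((2 * p / q) * (if g z.1 = false ∧ z.2 = true then (1:ℝ) else 0) +
            (1 / (1 - q)) * (if g z.1 = true ∧ z.2 = false then (1:ℝ) else 0))
        ∂(binMeasure q Fp F)) =
      (2 * p / q) * ((binMeasure q Fp F) {z : X × Bool | g z.1 = false ∧ z.2 = true}).toReal +
        (1 / (1 - q)) * ((binMeasure q Fp F) {z : X × Bool | g z.1 = true ∧ z.2 = false}).toReal := by
    have heq : (fun z : X × Bool =>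
          ((2 * p / q) * (if g z.1 = false ∧ z.2 = true then (1:ℝ) else 0) +
            (1 / (1 - q)) * (if g z.1 = true ∧ z.2 = false then (1:ℝ) else 0))) =
        fun z => ({z : X × Bool | g z.1 = false ∧ z.2 = true}).indicator
            (fun _ => (2 * p / q)) z +
          ({z : X × Bool | g z.1 = true ∧ z.2 = false}).indicator
            (fun _ => (1 / (1 - q))) z := by
      funext z
      simp only [Set.indicator_apply, Set.mem_setOf_eq, mul_ite, mul_one, mul_zero]
    rw [heq, integral_add ((integrable_const _).indicator hS1)
      ((integrable_const _).indicator hS2),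
      integral_indicator_const _ hS1, integral_indicator_const _ hS2]
    simp [mul_comm, Measure.real]
  rw [hint]
  -- measures of the two sets
  have hm1 : ((binMeasure q Fp F) {z : X × Bool | g z.1 = false ∧ z.2 = true}).toReal =
      q * aF := by
    rw [binMeasure_apply _ _ _ hS1]
    have h1 : (fun x => (x, true)) ⁻¹' {z : X × Bool | g z.1 = false ∧ z.2 = true} =
        {x | g x = false} := by ext x; simp
    have h2 : (fun x => (x, false)) ⁻¹' {z : X × Bool | g z.1 = false ∧ z.2 = true} =
        (∅ : Set X) := by ext x; simp
    rw [h1, h2]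
    simp [ENNReal.toReal_mul, ENNReal.toReal_ofReal hq0.le, haF]
  have hFgt : (F {x | g x = true}).toReal = p * aT + (1 - p) * bT := by
    rw [hF]
    simp only [Measure.add_apply, Measure.smul_apply, smul_eq_mul]
    rw [ENNReal.toReal_add (ENNReal.mul_ne_top ENNReal.ofReal_ne_top (hFpfin _))
      (ENNReal.mul_ne_top ENNReal.ofReal_ne_top (hFmfin _)),
      ENNReal.toReal_mul, ENNReal.toReal_mul,
      ENNReal.toReal_ofReal hp0.le, ENNReal.toReal_ofReal (by linarith)]
  have hm2 : ((binMeasure q Fp F) {z : X × Bool | g z.1 = true ∧ z.2 = false}).toReal =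
      (1 - q) * (p * aT + (1 - p) * bT) := by
    rw [binMeasure_apply _ _ _ hS2]
    have h1 : (fun x => (x, true)) ⁻¹' {z : X × Bool | g z.1 = true ∧ z.2 = false} =
        (∅ : Set X) := by ext x; simp
    have h2 : (fun x => (x, false)) ⁻¹' {z : X × Bool | g z.1 = true ∧ z.2 = false} =
        {x | g x = true} := by ext x; simp
    rw [h1, h2]
    have hFfin' : F {x | g x = true} ≠ ⊤ := by
      rw [hF]
      simp only [Measure.add_apply, Measure.smul_apply, smul_eq_mul]
      exact ENNReal.add_ne_top.2 ⟨ENNReal.mul_ne_top ENNReal.ofReal_ne_top (hFpfin _),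
        ENNReal.mul_ne_top ENNReal.ofReal_ne_top (hFmfin _)⟩
    simp only [measure_empty, mul_zero, zero_add]
    rw [ENNReal.toReal_mul, ENNReal.toReal_ofReal (by linarith), hFgt]
  rw [hLHS, hm1, hm2]
  have hqne : q ≠ 0 := ne_of_gt hq0
  have hq1ne : (1 : ℝ) - q ≠ 0 := by linarith
  rw [show aT = 1 - aF from by linarith]
  field_simp
  ring
end

section
/- Positive-unlabeled learning: let X be a measurable space, p ∈ (0,1), q ∈ (0,1), F_+, F_− probability measures on X, F = p F_+ + (1−p) F_−, and let P, P' on X×{−1,+1} be given by P(A×{+1}) = p F_+(A), P(A×{−1}) = (1−p) F_−(A), P'(A×{+1}) = q F_+(A), P'(A×{−1}) = (1−q) F(A). Let η : X → [0,1] be a measurable function satisfying η(x) = p (dF_+/dF)(x) for F-almost every x (a version of the posterior probability P{Y=+1 | X=x}). Then for P'-almost every (x,y), the Radon–Nikodym derivative satisfies (dP/dP')(x,y) = (p/q) 1{y=+1} + ((1−η(x))/(1−q)) 1{y=−1}. -/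
open MeasureTheory
open scoped ENNReal

lemma withDensity_map_prod_bool {X : Type*} [MeasurableSpace X] (μ : Measure X)
    (b : Bool) (g : X × Bool → ℝ≥0∞) (hg : Measurable g) :
    (μ.map (fun x => (x, b))).withDensity g
      = (μ.withDensity (fun x => g (x, b))).map (fun x => (x, b)) := by
  have hι : Measurable (fun x : X => (x, b)) := measurable_id.prodMk measurable_const
  ext s hs
  rw [withDensity_apply _ hs, Measure.map_apply hι hs,
    withDensity_apply _ (hι hs), ← lintegral_indicator hs,
    lintegral_map (hg.indicator hs) hι, ← lintegral_indicator (hι hs)]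
  refine lintegral_congr fun x => ?_
  by_cases hx : (x, b) ∈ s <;> simp [Set.indicator, hx]


/-- in the PU problem, if `η` is a version of the posterior
probability (`η = p · dF₊/dF` `F`-a.e. with `F = p F₊ + (1-p) F₋`), then for
`P'`-a.e. `(x,y)`: `dP/dP'(x,y) = (p/q) 1{y=+1} + ((1-η(x))/(1-q)) 1{y=-1}`. -/
theorem rnDeriv_pu_learning_posterior
    {X : Type*} [MeasurableSpace X]
    (p q : ℝ) (hp : p ∈ Set.Ioo (0:ℝ) 1) (hq : q ∈ Set.Ioo (0:ℝ) 1)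
    (Fp Fm : Measure X) [IsProbabilityMeasure Fp] [IsProbabilityMeasure Fm]
    (η : X → ℝ) (hηmeas : Measurable η) (hη01 : ∀ x, η x ∈ Set.Icc (0:ℝ) 1)
    (hη : ∀ᵐ x ∂(ENNReal.ofReal p • Fp + ENNReal.ofReal (1 - p) • Fm : Measure X),
      η x = p * ((Fp.rnDeriv (ENNReal.ofReal p • Fp + ENNReal.ofReal (1 - p) • Fm)
        x).toReal)) :
    ∀ᵐ z : X × Bool
        ∂(binMeasure q Fp (ENNReal.ofReal p • Fp + ENNReal.ofReal (1 - p) • Fm)),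
      ((binMeasure p Fp Fm).rnDeriv
          (binMeasure q Fp (ENNReal.ofReal p • Fp + ENNReal.ofReal (1 - p) • Fm))
          z).toReal =
        (p / q) * (if z.2 = true then (1:ℝ) else 0) +
          ((1 - η z.1) / (1 - q)) * (if z.2 = false then (1:ℝ) else 0) := by
  obtain ⟨hp0, hp1⟩ := hp
  obtain ⟨hq0, hq1⟩ := hq
  set F : Measure X := ENNReal.ofReal p • Fp + ENNReal.ofReal (1 - p) • Fm with hF
  haveI : IsFiniteMeasure F := by
    constructor
    simp only [hF, Measure.add_apply, Measure.smul_apply, smul_eq_mul, measure_univ, mul_one]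
    exact ENNReal.add_lt_top.2 ⟨ENNReal.ofReal_lt_top, ENNReal.ofReal_lt_top⟩
  have hac : Fp ≪ F := by
    intro s hs
    have h1 : (ENNReal.ofReal p • Fp) s = 0 :=
      le_antisymm (hs ▸ Measure.le_iff'.1 (Measure.le_add_right le_rfl) s) zero_le
    simpa [Measure.smul_apply, mul_eq_zero, ENNReal.ofReal_eq_zero, not_le.2 hp0] using h1
  set f : X → ℝ≥0∞ := Fp.rnDeriv F with hf
  have hfmeas : Measurable f := Measure.measurable_rnDeriv _ _
  have hFp : F.withDensity f = Fp := Measure.withDensity_rnDeriv_eq Fp F hac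
  have hφη : ∀ᵐ x ∂F, ENNReal.ofReal p * f x = ENNReal.ofReal (η x) := by
    filter_upwards [hη, Measure.rnDeriv_lt_top Fp F] with x hx hlt
    have hne : ENNReal.ofReal p * f x ≠ ⊤ := ENNReal.mul_ne_top ENNReal.ofReal_ne_top hlt.ne
    rw [← ENNReal.ofReal_toReal hne]
    congr 1
    rw [ENNReal.toReal_mul, ENNReal.toReal_ofReal hp0.le]
    exact hx.symm
  have hsub : ∀ᵐ x ∂F, (1 : ℝ≥0∞) - ENNReal.ofReal p * f x = ENNReal.ofReal (1 - η x) := by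
    filter_upwards [hφη] with x hx
    rw [hx, ENNReal.ofReal_sub _ (hη01 x).1, ENNReal.ofReal_one]
  have hle : ∀ᵐ x ∂F, ENNReal.ofReal p * f x ≤ 1 := by
    filter_upwards [hφη] with x hx
    rw [hx, ← ENNReal.ofReal_one]
    exact ENNReal.ofReal_le_ofReal (hη01 x).2
  have hwd1 : F.withDensity (fun x => ENNReal.ofReal p * f x) = ENNReal.ofReal p • Fp := by
    rw [← hFp, ← withDensity_smul _ hfmeas]
    rfl
  haveI : IsFiniteMeasure (ENNReal.ofReal p • Fp) := by
    constructor
    simp only [Measure.smul_apply, smul_eq_mul, measure_univ, mul_one]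
    exact ENNReal.ofReal_lt_top
  have hkey : F.withDensity (fun x => 1 - ENNReal.ofReal p * f x)
      = ENNReal.ofReal (1 - p) • Fm := by
    rw [← Measure.add_right_inj (ENNReal.ofReal p • Fp)]
    have h0 : ENNReal.ofReal p • Fp + F.withDensity (fun x => 1 - ENNReal.ofReal p * f x)
        = F.withDensity (fun x => ENNReal.ofReal p * f x)
          + F.withDensity (fun x => 1 - ENNReal.ofReal p * f x) := by rw [hwd1]
    rw [h0, ← withDensity_add_left (hfmeas.const_mul _)]
    have h1 : F.withDensity
        ((fun x => ENNReal.ofReal p * f x) + fun x => 1 - ENNReal.ofReal p * f x)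
        = F.withDensity (fun _ => (1 : ℝ≥0∞)) := by
      apply withDensity_congr_ae
      filter_upwards [hle] with x hx
      exact add_tsub_cancel_of_le hx
    rw [h1, withDensity_const, one_smul]
  set g : X × Bool → ℝ≥0∞ := fun z =>
    if z.2 = true then ENNReal.ofReal (p / q) else ENNReal.ofReal ((1 - η z.1) / (1 - q))
    with hg
  have hgmeas : Measurable g := by
    apply Measurable.ite
    · exact measurable_snd (measurableSet_singleton true)
    · exact measurable_const
    · exact ((measurable_const.sub (hηmeas.comp measurable_fst)).div_const _).ennreal_ofReal
  have hP : (binMeasure q Fp F).withDensity g = binMeasure p Fp Fm := by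
    unfold binMeasure
    rw [withDensity_add_measure, withDensity_smul_measure, withDensity_smul_measure,
      withDensity_map_prod_bool _ _ _ hgmeas, withDensity_map_prod_bool _ _ _ hgmeas]
    have h2 : Fp.withDensity (fun x : X => g (x, true)) = ENNReal.ofReal (p / q) • Fp := by
      have : (fun x : X => g (x, true)) = fun _ : X => ENNReal.ofReal (p / q) := by
        funext x; simp [hg]
      rw [this, withDensity_const]
    have h3 : F.withDensity (fun x : X => g (x, false))
        = (ENNReal.ofReal (1 - q)⁻¹ * ENNReal.ofReal (1 - p)) • Fm := by
      have he : (fun x : X => g (x, false))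
          = fun x : X => ENNReal.ofReal (1 - q)⁻¹ * ENNReal.ofReal (1 - η x) := by
        funext x
        simp only [hg, if_neg Bool.false_ne_true]
        rw [div_eq_inv_mul, ENNReal.ofReal_mul (inv_nonneg.mpr (by linarith))]
      rw [he,
        show (fun x : X => ENNReal.ofReal (1 - q)⁻¹ * ENNReal.ofReal (1 - η x))
          = ENNReal.ofReal (1 - q)⁻¹ • fun x : X => ENNReal.ofReal (1 - η x) from rfl,
        withDensity_smul _ (show Measurable (fun x : X => ENNReal.ofReal (1 - η x)) from
          (measurable_const.sub hηmeas).ennreal_ofReal),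
        withDensity_congr_ae (show (fun x => ENNReal.ofReal (1 - η x))
          =ᵐ[F] fun x => 1 - ENNReal.ofReal p * f x by
            filter_upwards [hsub] with x hx using hx.symm), hkey, smul_smul]
    rw [h2, h3, Measure.map_smul, Measure.map_smul, smul_smul, smul_smul]
    congr 1
    · congr 1
      rw [← ENNReal.ofReal_mul hq0.le]
      congr 1
      field_simp
    · congr 1
      rw [← mul_assoc, ← ENNReal.ofReal_mul (by linarith),
        mul_inv_cancel₀ (by linarith : (1:ℝ) - q ≠ 0), ENNReal.ofReal_one, one_mul]
  haveI : IsFiniteMeasure (binMeasure q Fp F) := by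
    constructor
    unfold binMeasure
    simp only [Measure.add_apply, Measure.smul_apply, smul_eq_mul]
    refine ENNReal.add_lt_top.2 ⟨?_, ?_⟩
    · exact ENNReal.mul_lt_top ENNReal.ofReal_lt_top (measure_lt_top _ _)
    · exact ENNReal.mul_lt_top ENNReal.ofReal_lt_top (measure_lt_top _ _)
  have hrn := Measure.rnDeriv_withDensity (binMeasure q Fp F) hgmeas
  rw [hP] at hrn
  filter_upwards [hrn] with z hz
  rw [hz]
  rcases z with ⟨x, b⟩
  cases b
  · simp only [hg, if_neg Bool.false_ne_true]
    rw [ENNReal.toReal_ofReal (div_nonneg (by linarith [(hη01 x).2]) (by linarith))]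
    norm_num
  · simp only [hg, if_pos rfl]
    rw [ENNReal.toReal_ofReal (div_nonneg hp0.le hq0.le)]
    norm_num
end

section
/- Let X be a measurable space, p, p̃ ∈ (0,1), F_+, F_− probability measures on X, μ = p F_+ + (1−p) F_−, μ̃ = p̃ F_+ + (1−p̃) F_−, and let η : X → [0,1] be measurable with ∫_A η dμ = p F_+(A) for every measurable A (i.e. η is a version of the posterior probability of the label +1 under the model (p, F_+, F_−)). Define the distributions P and P̃ on X×{−1,+1} by P(A×{+1}) = ∫_A η dμ, P(A×{−1}) = ∫_A (1−η) dμ, P̃(A×{+1}) = ∫_A η dμ̃, P̃(A×{−1}) = ∫_A (1−η) dμ̃. Then for every measurable classifier g : X → {−1,+1}, |R_P̃(g) − R_P(g)| ≤ 2|p̃ − p|, where R_Q(g) = Q{(x,y) : g(x) ≠ y}. -/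
open MeasureTheory

/-- The distribution on `X × Bool` with feature marginal `μ` and posterior
probability `η` of the label `+1` (labels encoded by `Bool`, `true ↦ +1`):
`P(A × {+1}) = ∫_A η dμ` and `P(A × {-1}) = ∫_A (1-η) dμ`. -/
noncomputable def postMeasure {X : Type*} [MeasurableSpace X]
    (μ : Measure X) (η : X → ℝ) : Measure (X × Bool) :=
  (μ.withDensity fun x => ENNReal.ofReal (η x)).map (fun x => (x, true)) +
    (μ.withDensity fun x => ENNReal.ofReal (1 - η x)).map (fun x => (x, false))

lemma postMeasure_risk {X : Type*} [MeasurableSpace X]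
    (μ : Measure X) (η : X → ℝ) (g : X → Bool) (hg : Measurable g) :
    (postMeasure μ η) {z : X × Bool | g z.1 ≠ z.2} =
      ∫⁻ x, (if g x then ENNReal.ofReal (1 - η x) else ENNReal.ofReal (η x)) ∂μ := by
  have hS : MeasurableSet {z : X × Bool | g z.1 ≠ z.2} :=
    (measurableSet_eq_fun (hg.comp measurable_fst) measurable_snd).compl
  have h1 : Measurable (fun x : X => (x, true)) := measurable_id.prodMk measurable_const
  have h2 : Measurable (fun x : X => (x, false)) := measurable_id.prodMk measurable_const
  have hgt : MeasurableSet {x : X | g x = true} := hg (by simp : MeasurableSet {true})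
  have hgf : MeasurableSet {x : X | g x = false} := hg (by simp : MeasurableSet {false})
  have e1 : (fun x : X => (x, true)) ⁻¹' {z : X × Bool | g z.1 ≠ z.2}
      = {x : X | g x = false} := by
    ext x
    simp only [Set.mem_preimage, Set.mem_setOf_eq, ne_eq, Bool.not_eq_true]
  have e2 : (fun x : X => (x, false)) ⁻¹' {z : X × Bool | g z.1 ≠ z.2}
      = {x : X | g x = true} := by
    ext x
    simp only [Set.mem_preimage, Set.mem_setOf_eq, ne_eq, Bool.not_eq_false]
  rw [postMeasure, Measure.add_apply, Measure.map_apply h1 hS, Measure.map_apply h2 hS,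
    e1, e2, withDensity_apply _ hgf, withDensity_apply _ hgt]
  have hcompl : {x : X | g x = false} = {x : X | g x = true}ᶜ := by
    ext x; simp
  rw [hcompl]
  have hA : ∫⁻ x in {x : X | g x = true}ᶜ, ENNReal.ofReal (η x) ∂μ
      = ∫⁻ x in {x : X | g x = true}ᶜ,
          (if g x then ENNReal.ofReal (1 - η x) else ENNReal.ofReal (η x)) ∂μ := by
    apply setLIntegral_congr_fun hgt.compl
    intro x hx
    simp only [Set.mem_compl_iff, Set.mem_setOf_eq, Bool.not_eq_true] at hx
    simp [hx]
  have hB : ∫⁻ x in {x : X | g x = true}, ENNReal.ofReal (1 - η x) ∂μ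
      = ∫⁻ x in {x : X | g x = true},
          (if g x then ENNReal.ofReal (1 - η x) else ENNReal.ofReal (η x)) ∂μ := by
    apply setLIntegral_congr_fun hgt
    intro x hx
    exact (if_pos hx).symm
  rw [hA, hB, add_comm, lintegral_add_compl _ hgt]

/-- inaccurate prior information about the test class probability.
If `P` and `P̃` share the posterior probability `η` but have feature marginals
`μ = p F₊ + (1-p) F₋` and `μ̃ = p̃ F₊ + (1-p̃) F₋` respectively, then the
classification risks of any measurable classifier differ by at most `2|p̃ - p|`. -/
theorem risk_stability_inaccurate_prior
    {X : Type*} [MeasurableSpace X]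
    (p ptil : ℝ) (hp : p ∈ Set.Ioo (0:ℝ) 1) (hptil : ptil ∈ Set.Ioo (0:ℝ) 1)
    (Fp Fm : Measure X) [IsProbabilityMeasure Fp] [IsProbabilityMeasure Fm]
    (η : X → ℝ) (hηmeas : Measurable η) (hη01 : ∀ x, η x ∈ Set.Icc (0:ℝ) 1)
    (hpost : ∀ A : Set X, MeasurableSet A →
      ∫ x in A, η x ∂(ENNReal.ofReal p • Fp + ENNReal.ofReal (1 - p) • Fm : Measure X) =
        p * (Fp A).toReal)
    (g : X → Bool) (hg : Measurable g) :
    |((postMeasure (ENNReal.ofReal ptil • Fp + ENNReal.ofReal (1 - ptil) • Fm) η)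
        {z : X × Bool | g z.1 ≠ z.2}).toReal -
      ((postMeasure (ENNReal.ofReal p • Fp + ENNReal.ofReal (1 - p) • Fm) η)
        {z : X × Bool | g z.1 ≠ z.2}).toReal| ≤
    2 * |ptil - p| := by
  set f : X → ENNReal :=
    fun x => (if g x then ENNReal.ofReal (1 - η x) else ENNReal.ofReal (η x)) with hf
  have hfle : ∀ x, f x ≤ 1 := by
    intro x
    obtain ⟨h0, h1⟩ := hη01 x
    by_cases h : g x <;>
      simp [hf, h, ENNReal.ofReal_le_one] <;> linarith
  have hA : ∫⁻ x, f x ∂Fp ≤ 1 := by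
    calc ∫⁻ x, f x ∂Fp ≤ ∫⁻ _, 1 ∂Fp := lintegral_mono hfle
    _ = 1 := by simp
  have hB : ∫⁻ x, f x ∂Fm ≤ 1 := by
    calc ∫⁻ x, f x ∂Fm ≤ ∫⁻ _, 1 ∂Fm := lintegral_mono hfle
    _ = 1 := by simp
  have hAt : (∫⁻ x, f x ∂Fp) ≠ ⊤ := ne_top_of_le_ne_top ENNReal.one_ne_top hA
  have hBt : (∫⁻ x, f x ∂Fm) ≠ ⊤ := ne_top_of_le_ne_top ENNReal.one_ne_top hB
  set a : ℝ := (∫⁻ x, f x ∂Fp).toReal with ha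
  set b : ℝ := (∫⁻ x, f x ∂Fm).toReal with hb
  have ha0 : 0 ≤ a := ENNReal.toReal_nonneg
  have hb0 : 0 ≤ b := ENNReal.toReal_nonneg
  have ha1 : a ≤ 1 := by
    rw [ha]; exact ENNReal.toReal_le_of_le_ofReal zero_le_one (by simpa using hA)
  have hb1 : b ≤ 1 := by
    rw [hb]; exact ENNReal.toReal_le_of_le_ofReal zero_le_one (by simpa using hB)
  have key : ∀ q : ℝ, 0 ≤ q → q ≤ 1 →
      ((postMeasure (ENNReal.ofReal q • Fp + ENNReal.ofReal (1 - q) • Fm) η)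
        {z : X × Bool | g z.1 ≠ z.2}).toReal = q * a + (1 - q) * b := by
    intro q hq0 hq1
    rw [postMeasure_risk _ _ _ hg, lintegral_add_measure, lintegral_smul_measure,
      lintegral_smul_measure, smul_eq_mul, smul_eq_mul, ENNReal.toReal_add, ENNReal.toReal_mul, ENNReal.toReal_mul,
      ENNReal.toReal_ofReal hq0, ENNReal.toReal_ofReal (by linarith)]
    · exact ENNReal.mul_ne_top ENNReal.ofReal_ne_top hAt
    · exact ENNReal.mul_ne_top ENNReal.ofReal_ne_top hBt
  rw [key p hp.1.le hp.2.le, key ptil hptil.1.le hptil.2.le]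
  have : ptil * a + (1 - ptil) * b - (p * a + (1 - p) * b) = (ptil - p) * (a - b) := by ring
  rw [this, abs_mul]
  have hab : |a - b| ≤ 1 := abs_le.2 ⟨by linarith, by linarith⟩
  nlinarith [abs_nonneg (ptil - p)]
end

section
/- Binary class-probability reweighting, deterministic bound: let p ∈ (0,1), ε ∈ (0,1/2), p' ∈ (ε, 1−ε), and let (X'_1,Y'_1),…,(X'_n,Y'_n) be points of X×{−1,+1} with n'_+ = #{i : Y'_i = +1} satisfying 0 < n'_+ < n; set n'_− = n − n'_+. Define R̃_{w*,n}(g) = (p/p')(1/n)Σ_{i:Y'_i=+1} 1{g(X'_i)=−1} + ((1−p)/(1−p'))(1/n)Σ_{i:Y'_i=−1} 1{g(X'_i)=+1} and R̃_{ŵ*,n}(g) = (p/n'_+)Σ_{i:Y'_i=+1} 1{g(X'_i)=−1} + ((1−p)/n'_−)Σ_{i:Y'_i=−1} 1{g(X'_i)=+1}. Then for every classifier g : X → {−1,+1}, |R̃_{ŵ*,n}(g) − R̃_{w*,n}(g)| ≤ (|n'_+/n − p'|/ε²) · (1 + |n'_+/n − p'| · (p/(n'_+/n) + (1−p)/(1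 − n'_+/n))). -/
set_option maxHeartbeats 1000000 in
/-- deterministic bound on the deviation between the plug-in
weighted empirical risk and the ideally weighted one, for binary classification
with varying class probabilities, valid for any fixed sample containing both
labels. -/
theorem plugin_vs_ideal_binary_deterministic
    {X : Type*}
    (p p' ε : ℝ) (hp : p ∈ Set.Ioo (0:ℝ) 1) (hε : ε ∈ Set.Ioo (0:ℝ) (1/2))
    (hp' : p' ∈ Set.Ioo ε (1 - ε))
    (n : ℕ) (ω : Fin n → X × Bool)
    (hpos : 0 < nPos ω) (hlt : nPos ω < n)
    (g : X → Bool) :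
    |((p / (nPos ω : ℝ)) * posErr ω g +
        ((1 - p) / ((n : ℝ) - (nPos ω : ℝ))) * negErr ω g) -
      ((p / p') * (1 / (n : ℝ)) * posErr ω g +
        ((1 - p) / (1 - p')) * (1 / (n : ℝ)) * negErr ω g)| ≤
    (|(nPos ω : ℝ) / n - p'| / ε ^ 2) *
      (1 + |(nPos ω : ℝ) / n - p'| *
        (p / ((nPos ω : ℝ) / n) + (1 - p) / (1 - (nPos ω : ℝ) / n))) := by
  obtain ⟨hp0, hp1⟩ := hp
  obtain ⟨hε0, hε1⟩ := hε
  obtain ⟨hp'1, hp'2⟩ := hp'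
  set A := posErr ω g with hAdef
  set B := negErr ω g with hBdef
  set m : ℝ := (nPos ω : ℝ) with hmdef
  set N : ℝ := (n : ℝ) with hNdef
  have hm : 0 < m := by rw [hmdef]; exact_mod_cast hpos
  have hmN : m < N := by rw [hmdef, hNdef]; exact_mod_cast hlt
  have hN : 0 < N := lt_trans hm hmN
  have hp'0 : 0 < p' := lt_trans hε0 hp'1
  have hp'lt1 : p' < 1 := by linarith
  have hA0 : 0 ≤ A := Finset.sum_nonneg fun i _ => by split_ifs <;> norm_num
  have hB0 : 0 ≤ B := Finset.sum_nonneg fun i _ => by split_ifs <;> norm_num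
  have hmsum : m = ∑ i, if (ω i).2 = true then (1:ℝ) else 0 := by
    rw [hmdef]; unfold nPos; rw [Finset.card_filter]; push_cast; rfl
  have hA : A ≤ m := by
    rw [hmsum, hAdef]
    unfold posErr
    exact Finset.sum_le_sum fun i _ => by split_ifs <;> simp_all
  have hsum : m + (∑ i, if (ω i).2 = false then (1:ℝ) else 0) = N := by
    rw [hmsum, ← Finset.sum_add_distrib]
    have : ∀ i : Fin n, ((if (ω i).2 = true then (1:ℝ) else 0)
        + if (ω i).2 = false then (1:ℝ) else 0) = 1 := by
      intro i; cases h : (ω i).2 <;> simp [h]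
    rw [Finset.sum_congr rfl fun i _ => this i]
    simp [hNdef]
  have hB : B ≤ N - m := by
    have : B ≤ ∑ i, if (ω i).2 = false then (1:ℝ) else 0 := by
      rw [hBdef]; unfold negErr
      exact Finset.sum_le_sum fun i _ => by split_ifs <;> simp_all
    linarith
  set d := |m / N - p'| with hddef
  have hd0 : 0 ≤ d := abs_nonneg _
  have e2 : |p' * N - m| = d * N := by
    have h : p' * N - m = -((m / N - p') * N) := by field_simp; ring
    rw [h, abs_neg, abs_mul, abs_of_pos hN]
  have e2' : |m - p' * N| = d * N := by
    rw [← abs_neg]; rw [show -(m - p' * N) = p' * N - m by ring]; exact e2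
  -- bound the first coefficient
  have h1 : |p / m - p / (p' * N)| * A ≤ p * d / ε := by
    have e1 : p / m - p / (p' * N) = p * (p' * N - m) / (m * (p' * N)) := by
      field_simp
    have habs : |p / m - p / (p' * N)| = p * (d * N) / (m * (p' * N)) := by
      rw [e1, abs_div, abs_mul, abs_of_pos hp0, e2, abs_of_pos (by positivity)]
    calc |p / m - p / (p' * N)| * A
        ≤ (p * (d * N) / (m * (p' * N))) * m := by
          rw [habs]; exact mul_le_mul_of_nonneg_left hA (by positivity)
      _ = p * d / p' := by field_simp
      _ ≤ p * d / ε := by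
          apply div_le_div_of_nonneg_left (by positivity) hε0 (le_of_lt hp'1)
  have h2 : |(1 - p) / (N - m) - (1 - p) / ((1 - p') * N)| * B ≤ (1 - p) * d / ε := by
    have hNm : 0 < N - m := by linarith
    have h1p' : 0 < 1 - p' := by linarith
    have e1 : (1 - p) / (N - m) - (1 - p) / ((1 - p') * N)
        = (1 - p) * (m - p' * N) / ((N - m) * ((1 - p') * N)) := by
      field_simp; ring
    have habs : |(1 - p) / (N - m) - (1 - p) / ((1 - p') * N)|
        = (1 - p) * (d * N) / ((N - m) * ((1 - p') * N)) := by
      rw [e1, abs_div, abs_mul, abs_of_pos (by linarith : (0:ℝ) < 1 - p), e2',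
        abs_of_pos (mul_pos hNm (mul_pos h1p' hN))]
    calc |(1 - p) / (N - m) - (1 - p) / ((1 - p') * N)| * B
        ≤ ((1 - p) * (d * N) / ((N - m) * ((1 - p') * N))) * (N - m) := by
          rw [habs]
          exact mul_le_mul_of_nonneg_left hB
            (div_nonneg (mul_nonneg (by linarith) (by positivity))
              (le_of_lt (mul_pos hNm (mul_pos h1p' hN))))
      _ = (1 - p) * d / (1 - p') := by field_simp
      _ ≤ (1 - p) * d / ε := by
          apply div_le_div_of_nonneg_left (mul_nonneg (by linarith) hd0) hε0 (by linarith)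
  have key : |(p / m * A + (1 - p) / (N - m) * B)
      - (p / p' * (1 / N) * A + (1 - p) / (1 - p') * (1 / N) * B)| ≤ d / ε := by
    have hrw : (p / m * A + (1 - p) / (N - m) * B)
        - (p / p' * (1 / N) * A + (1 - p) / (1 - p') * (1 / N) * B)
        = (p / m - p / (p' * N)) * A
          + ((1 - p) / (N - m) - (1 - p) / ((1 - p') * N)) * B := by
      have h1p' : (1:ℝ) - p' ≠ 0 := by linarith
      have hNm : N - m ≠ 0 := by linarith
      field_simp
      ring
    rw [hrw]
    calc |(p / m - p / (p' * N)) * A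
          + ((1 - p) / (N - m) - (1 - p) / ((1 - p') * N)) * B|
        ≤ |(p / m - p / (p' * N)) * A|
          + |((1 - p) / (N - m) - (1 - p) / ((1 - p') * N)) * B| := abs_add_le _ _
      _ = |p / m - p / (p' * N)| * A
          + |(1 - p) / (N - m) - (1 - p) / ((1 - p') * N)| * B := by
          rw [abs_mul, abs_mul, abs_of_nonneg hA0, abs_of_nonneg hB0]
      _ ≤ p * d / ε + (1 - p) * d / ε := add_le_add h1 h2
      _ = d / ε := by ring
  have hK : 0 ≤ p / (m / N) + (1 - p) / (1 - m / N) := by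
    have h1 : 0 < m / N := by positivity
    have h2 : m / N < 1 := (div_lt_one hN).mpr hmN
    have := div_nonneg (le_of_lt hp0) (le_of_lt h1)
    have := div_nonneg (by linarith : (0:ℝ) ≤ 1 - p) (by linarith : (0:ℝ) ≤ 1 - m / N)
    linarith
  calc |(p / m * A + (1 - p) / (N - m) * B)
      - (p / p' * (1 / N) * A + (1 - p) / (1 - p') * (1 / N) * B)|
      ≤ d / ε := key
    _ ≤ d / ε ^ 2 := by
        apply div_le_div_of_nonneg_left hd0 (by positivity)
        nlinarith
    _ = d / ε ^ 2 * 1 := by ring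
    _ ≤ d / ε ^ 2 * (1 + d * (p / (m / N) + (1 - p) / (1 - m / N))) := by
        apply mul_le_mul_of_nonneg_left _ (by positivity)
        linarith [mul_nonneg hd0 hK]
end

section
/- Stratified reweighting, deterministic bound: let K ≥ 1, ε ∈ (0,1/2), p_k ∈ [0,1] and p'_k ∈ (ε, 1−ε) for k = 1,…,K, Θ a parameter set, ℓ : Θ × Z → [0,L] a bounded loss on Z = X×{1,…,K}, and let Z'_1 = (X'_1,S'_1),…,Z'_n = (X'_n,S'_n) be points of Z with n'_k = #{i : S'_i = k} > 0 for all k. Define R̃_{w*,n}(θ) = (1/n)Σ_{i=1}^n ℓ(θ,Z'_i) Σ_k 1{S'_i=k} p_k/p'_k and R̃_{ŵ*,n}(θ) = Σ_{i=1}^n ℓ(θ,Z'_i) Σ_k 1{S'_i=k} p_k/n'_k. Then for every θ ∈ Θ, |R̃_{ŵ*,n}(θ) − R̃_{w*,n}(θ)| ≤ (L/ε²) Σ_{k=1}^K |n'_k/n − p'_k| · p_k · (1 + |n'_k/n − p'_k|/(n'_k/n)). -/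
/-- Number `n'ₖ` of sample points in stratum `k`. -/
def nStratum {X : Type*} {K n : ℕ} (ω : Fin n → X × Fin K) (k : Fin K) : ℕ :=
  (Finset.univ.filter fun i => (ω i).2 = k).card

/-- deterministic bound on the deviation between the plug-in
weighted empirical risk (weights `p k / n'ₖ`) and the ideally weighted one
(weights `p k / p' k`) in the stratified setting, valid for any fixed sample in
which every stratum is represented. -/
theorem plugin_vs_ideal_stratified_deterministic
    {X : Type*} {Θ : Type*}
    (K : ℕ) (hK : 1 ≤ K) (ε : ℝ) (hε : ε ∈ Set.Ioo (0:ℝ) (1/2))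
    (p p' : Fin K → ℝ)
    (hp : ∀ k, p k ∈ Set.Icc (0:ℝ) 1) (hp' : ∀ k, p' k ∈ Set.Ioo ε (1 - ε))
    (L : ℝ) (ℓ : Θ → X × Fin K → ℝ)
    (hℓnonneg : ∀ θ z, 0 ≤ ℓ θ z) (hℓle : ∀ θ z, ℓ θ z ≤ L)
    (n : ℕ) (ω : Fin n → X × Fin K)
    (hpos : ∀ k, 0 < nStratum ω k)
    (θ : Θ) :
    |(∑ i, ℓ θ (ω i) *
        ∑ k, if (ω i).2 = k then p k / (nStratum ω k : ℝ) else 0) -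
      (1 / (n : ℝ)) * ∑ i, ℓ θ (ω i) *
        ∑ k, if (ω i).2 = k then p k / p' k else 0| ≤
    (L / ε ^ 2) * ∑ k, |(nStratum ω k : ℝ) / n - p' k| * p k *
      (1 + |(nStratum ω k : ℝ) / n - p' k| / ((nStratum ω k : ℝ) / n)) := by
  obtain ⟨hε0, hε2⟩ := hε
  have hε1 : ε ≤ 1 := by linarith
  have k0 : Fin K := ⟨0, by omega⟩
  have hnpos : 0 < n := by
    have h1 := hpos k0
    have h2 : nStratum ω k0 ≤ n := by
      unfold nStratum
      exact (Finset.card_filter_le _ _).trans (by simp)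
    omega
  have hL : 0 ≤ L := le_trans (hℓnonneg θ (ω ⟨0, hnpos⟩)) (hℓle θ (ω ⟨0, hnpos⟩))
  have hN : (0:ℝ) < n := Nat.cast_pos.mpr hnpos
  set S : Fin K → ℝ := fun k => ∑ i ∈ Finset.univ.filter (fun i => (ω i).2 = k), ℓ θ (ω i) with hS
  have key : ∀ c : Fin K → ℝ,
      (∑ i, ℓ θ (ω i) * ∑ k, if (ω i).2 = k then c k else 0) = ∑ k, c k * S k := by
    intro c
    calc (∑ i, ℓ θ (ω i) * ∑ k, if (ω i).2 = k then c k else 0)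
        = ∑ i, ∑ k, (if (ω i).2 = k then ℓ θ (ω i) * c k else 0) := by
          refine Finset.sum_congr rfl fun i _ => ?_
          rw [Finset.mul_sum]
          refine Finset.sum_congr rfl fun k _ => ?_
          split <;> simp
      _ = ∑ k, ∑ i, (if (ω i).2 = k then ℓ θ (ω i) * c k else 0) := Finset.sum_comm
      _ = ∑ k, c k * S k := by
          refine Finset.sum_congr rfl fun k _ => ?_
          rw [← Finset.sum_filter, ← Finset.sum_mul, mul_comm]
  rw [key, key, Finset.mul_sum, ← Finset.sum_sub_distrib]
  refine le_trans (Finset.abs_sum_le_sum_abs _ _) ?_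
  rw [Finset.mul_sum]
  refine Finset.sum_le_sum fun k _ => ?_
  -- per-stratum bound
  set a : ℝ := (nStratum ω k : ℝ) with ha
  have hapos : (0:ℝ) < a := by rw [ha]; exact_mod_cast hpos k
  have haN : a ≤ (n:ℝ) := by
    have : nStratum ω k ≤ n := by
      unfold nStratum
      exact (Finset.card_filter_le _ _).trans (by simp)
    rw [ha]; exact_mod_cast this
  obtain ⟨hq1, hq2⟩ := hp' k
  have hq : 0 < p' k := lt_trans hε0 hq1
  obtain ⟨hpk0, hpk1⟩ := hp k
  set d : ℝ := |a / n - p' k| with hd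
  have hd0 : 0 ≤ d := abs_nonneg _
  have hSk : 0 ≤ S k ∧ S k ≤ L * a := by
    constructor
    · exact Finset.sum_nonneg fun i _ => hℓnonneg θ _
    · have := Finset.sum_le_card_nsmul (Finset.univ.filter (fun i => (ω i).2 = k))
        (fun i => ℓ θ (ω i)) L (fun i _ => hℓle θ _)
      rw [nsmul_eq_mul] at this
      calc S k ≤ (nStratum ω k : ℝ) * L := this
        _ = L * a := by rw [ha, mul_comm]
  have h1 : p k / a - 1 / (n:ℝ) * (p k / p' k) = p k * ((n:ℝ) * p' k - a) / (a * n * p' k) := by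
    field_simp
  have h2 : |(n:ℝ) * p' k - a| = (n:ℝ) * d := by
    have : (n:ℝ) * p' k - a = -((n:ℝ) * (a / n - p' k)) := by field_simp; ring
    rw [this, abs_neg, abs_mul, abs_of_pos hN, hd]
  have h3 : |p k / a - 1 / (n:ℝ) * (p k / p' k)| = p k * d / (a * p' k) := by
    rw [h1, abs_div, abs_mul, abs_of_nonneg hpk0, h2,
      abs_of_pos (by positivity : (0:ℝ) < a * n * p' k)]
    field_simp
  have hre : p k / a * S k - 1 / (n:ℝ) * (p k / p' k * S k)
      = (p k / a - 1 / (n:ℝ) * (p k / p' k)) * S k := by ring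
  rw [hre, abs_mul, h3, abs_of_nonneg hSk.1]
  have step1 : p k * d / (a * p' k) * S k ≤ L * (p k * d) / p' k := by
    rw [div_mul_eq_mul_div, div_le_div_iff₀ (by positivity) hq]
    calc p k * d * S k * p' k ≤ p k * d * (L * a) * p' k := by
          nlinarith [mul_le_mul_of_nonneg_left hSk.2
            (mul_nonneg (mul_nonneg hpk0 hd0) hq.le)]
      _ = L * (p k * d) * (a * p' k) := by ring
  refine step1.trans ?_
  have step2 : L * (p k * d) / p' k ≤ L / ε ^ 2 * (d * p k) := by
    have h4 : ε ^ 2 ≤ p' k := by nlinarith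
    rw [div_le_iff₀ hq]
    have h5 : L / ε ^ 2 * (d * p k) * ε ^ 2 ≤ L / ε ^ 2 * (d * p k) * p' k :=
      mul_le_mul_of_nonneg_left h4 (by positivity)
    have hε2ne : ε ^ 2 ≠ 0 := by positivity
    have heq : L / ε ^ 2 * (d * p k) * ε ^ 2 = L * (p k * d) := by
      have hc : L / ε ^ 2 * ε ^ 2 = L := div_mul_cancel₀ L hε2ne
      calc L / ε ^ 2 * (d * p k) * ε ^ 2 = L / ε ^ 2 * ε ^ 2 * (d * p k) := by ring
        _ = L * (p k * d) := by rw [hc]; ring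
    linarith
  refine step2.trans ?_
  have h5 : 0 ≤ d / (a / n) := by positivity
  have h6 : (0:ℝ) ≤ L / ε ^ 2 * (d * p k) := by positivity
  nlinarith [mul_le_mul_of_nonneg_left (by linarith : (1:ℝ) ≤ 1 + d / (a / n)) h6]
end

section
/- PU reweighting, deterministic bound: let p ∈ (0,1), ε ∈ (0,1/2), q ∈ (ε, 1−ε), and let (X'_1,Y'_1),…,(X'_n,Y'_n) be points of X×{−1,+1} with n'_+ = #{i : Y'_i = +1} satisfying 0 < n'_+ < n; set n'_− = n − n'_+. Define R̃_{w*,n}(g) = (2p/q)(1/n)Σ_{i:Y'_i=+1} 1{g(X'_i)=−1} + (1/(1−q))(1/n)Σ_{i:Y'_i=−1} 1{g(X'_i)=+1} and R̃_{ŵ*,n}(g) = (2p/n'_+)Σ_{i:Y'_i=+1} 1{g(X'_i)=−1} + (1/n'_−)Σ_{i:Y'_i=−1} 1{g(X'_i)=+1}. Then for every classifier g : X → {−1,+1}, |R̃_{ŵ*,n}(g) − R̃_{w*,n}(g)| ≤ (|n'_+/n − q|/ε²) · (2p + 1 + |n'_+/n − q| · (2p/(n'_+/n) + 1/(1 − n'_+/n))).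 -/
lemma posErr_nonneg {X : Type*} {n : ℕ} (ω : Fin n → X × Bool) (g : X → Bool) :
    0 ≤ posErr ω g :=
  Finset.sum_nonneg fun i _ => by split_ifs <;> norm_num

lemma negErr_nonneg {X : Type*} {n : ℕ} (ω : Fin n → X × Bool) (g : X → Bool) :
    0 ≤ negErr ω g :=
  Finset.sum_nonneg fun i _ => by split_ifs <;> norm_num

lemma posErr_le {X : Type*} {n : ℕ} (ω : Fin n → X × Bool) (g : X → Bool) :
    posErr ω g ≤ (nPos ω : ℝ) := by
  unfold posErr nPos
  rw [Finset.card_filter]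
  push_cast
  apply Finset.sum_le_sum
  intro i _
  split_ifs with h1 h2 <;> simp_all

lemma negErr_le {X : Type*} {n : ℕ} (ω : Fin n → X × Bool) (g : X → Bool) :
    negErr ω g ≤ (n : ℝ) - (nPos ω : ℝ) := by
  have hcard : nPos ω + (Finset.univ.filter fun i => ¬ ((ω i).2 = true)).card = n := by
    rw [nPos, Finset.card_filter_add_card_filter_not, Finset.card_univ,
      Fintype.card_fin]
  have h2 : negErr ω g ≤ ((Finset.univ.filter fun i => ¬ ((ω i).2 = true)).card : ℝ) := by
    unfold negErr
    rw [Finset.card_filter]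
    push_cast
    apply Finset.sum_le_sum
    intro i _
    split_ifs with h1 h2 <;> simp_all
  have := hcard
  have : ((Finset.univ.filter fun i => ¬ ((ω i).2 = true)).card : ℝ)
      = (n : ℝ) - (nPos ω : ℝ) := by
    have : (nPos ω : ℝ) + ((Finset.univ.filter fun i => ¬ ((ω i).2 = true)).card : ℝ)
        = (n : ℝ) := by exact_mod_cast congrArg (Nat.cast : ℕ → ℝ) hcard
    linarith
  linarith [h2, this.le]

lemma key_aux (p ε q qh A B : ℝ) (hp : 0 < p) (hε0 : 0 < ε) (hε1 : ε < 1)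
    (hq1 : ε ≤ q) (hq2 : q ≤ 1 - ε) (h0 : 0 < qh) (h1 : qh < 1)
    (hA0 : 0 ≤ A) (hA : A ≤ qh) (hB0 : 0 ≤ B) (hB : B ≤ 1 - qh) :
    |2*p*A*(1/qh - 1/q) + B*(1/(1-qh) - 1/(1-q))| ≤
      (|qh - q| / ε^2)*(2*p + 1 + |qh - q| * (2*p/qh + 1/(1-qh))) := by
  have hq0 : 0 < q := lt_of_lt_of_le hε0 hq1
  have hq1' : 0 < 1 - q := by linarith
  have hqh1 : 0 < 1 - qh := by linarith
  have hε2 : 0 < ε^2 := by positivity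
  have hεsq : ε^2 ≤ q := by nlinarith
  have hεsq' : ε^2 ≤ 1 - q := by nlinarith
  set d := |qh - q| with hd
  have hd0 : 0 ≤ d := abs_nonneg _
  have e1 : 1/qh - 1/q = (q - qh)/(qh*q) := by field_simp
  have e2 : 1/(1-qh) - 1/(1-q) = (qh - q)/((1-qh)*(1-q)) := by field_simp; ring
  have habs1 : |2*p*A*(1/qh - 1/q)| = 2*p*A*(d/(qh*q)) := by
    rw [e1, abs_mul, abs_div, abs_of_nonneg (by positivity : (0:ℝ) ≤ 2*p*A),
      abs_of_pos (by positivity : (0:ℝ) < qh*q), abs_sub_comm]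
  have habs2 : |B*(1/(1-qh) - 1/(1-q))| = B*(d/((1-qh)*(1-q))) := by
    rw [e2, abs_mul, abs_div, abs_of_nonneg hB0,
      abs_of_pos (by positivity : (0:ℝ) < (1-qh)*(1-q))]
  have h1' : 2*p*A*(d/(qh*q)) ≤ 2*p*d/ε^2 := by
    rw [show 2*p*A*(d/(qh*q)) = (2*p*A*d)/(qh*q) by ring,
      show 2*p*d/ε^2 = (2*p*d)/ε^2 by ring,
      div_le_div_iff₀ (by positivity) hε2]
    nlinarith [mul_le_mul hA hεsq hε2.le h0.le, mul_nonneg hp.le hd0,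
      mul_nonneg (mul_nonneg hp.le hd0) (mul_nonneg hA0 hε2.le)]
  have h2' : B*(d/((1-qh)*(1-q))) ≤ d/ε^2 := by
    rw [show B*(d/((1-qh)*(1-q))) = (B*d)/((1-qh)*(1-q)) by ring,
      div_le_div_iff₀ (by positivity) hε2]
    nlinarith [mul_le_mul hB hεsq' hε2.le hqh1.le, hd0,
      mul_nonneg hd0 (mul_nonneg hB0 hε2.le)]
  have h3 : 0 ≤ (d/ε^2)*(d*(2*p/qh + 1/(1-qh))) := by positivity
  calc |2*p*A*(1/qh - 1/q) + B*(1/(1-qh) - 1/(1-q))|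
      ≤ |2*p*A*(1/qh - 1/q)| + |B*(1/(1-qh) - 1/(1-q))| := abs_add_le _ _
    _ ≤ 2*p*d/ε^2 + d/ε^2 := by rw [habs1, habs2]; exact add_le_add h1' h2'
    _ ≤ (d/ε^2)*(2*p + 1 + d*(2*p/qh + 1/(1-qh))) := by
        have : (d/ε^2)*(2*p + 1 + d*(2*p/qh + 1/(1-qh)))
            = 2*p*d/ε^2 + d/ε^2 + (d/ε^2)*(d*(2*p/qh + 1/(1-qh))) := by ring
        linarith

/-- deterministic bound on the deviation between the plug-in PU
weighted empirical risk and the ideally weighted one, valid for any fixed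
sample containing both labeled-positive and unlabeled points. -/
theorem plugin_vs_ideal_pu_deterministic
    {X : Type*}
    (p ε q : ℝ) (hp : p ∈ Set.Ioo (0:ℝ) 1) (hε : ε ∈ Set.Ioo (0:ℝ) (1/2))
    (hq : q ∈ Set.Ioo ε (1 - ε))
    (n : ℕ) (ω : Fin n → X × Bool)
    (hpos : 0 < nPos ω) (hlt : nPos ω < n)
    (g : X → Bool) :
    |((2 * p / (nPos ω : ℝ)) * posErr ω g +
        (1 / ((n : ℝ) - (nPos ω : ℝ))) * negErr ω g) -
      ((2 * p / q) * (1 / (n : ℝ)) * posErr ω g +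
        (1 / (1 - q)) * (1 / (n : ℝ)) * negErr ω g)| ≤
    (|(nPos ω : ℝ) / n - q| / ε ^ 2) *
      (2 * p + 1 + |(nPos ω : ℝ) / n - q| *
        (2 * p / ((nPos ω : ℝ) / n) + 1 / (1 - (nPos ω : ℝ) / n))) := by
  obtain ⟨hp0, hp1⟩ := hp
  obtain ⟨hε0, hε1⟩ := hε
  obtain ⟨hq1, hq2⟩ := hq
  have hm0 : (0:ℝ) < (nPos ω : ℝ) := by exact_mod_cast hpos
  have hmn : (nPos ω : ℝ) < (n : ℝ) := by exact_mod_cast hlt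
  have hn0 : (0:ℝ) < (n : ℝ) := lt_trans hm0 hmn
  have hq0 : 0 < q := lt_trans hε0 hq1
  have hq1' : 0 < 1 - q := by linarith
  set m : ℝ := (nPos ω : ℝ) with hm
  set qh : ℝ := m / n with hqh
  set A : ℝ := posErr ω g / n with hA
  set B : ℝ := negErr ω g / n with hB
  have hqh0 : 0 < qh := by positivity
  have hqh1 : qh < 1 := by rw [hqh, div_lt_one hn0]; exact hmn
  have hA0 : 0 ≤ A := div_nonneg (posErr_nonneg ω g) hn0.le
  have hAle : A ≤ qh := by
    rw [hA, hqh]; gcongr; exact posErr_le ω g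
  have hB0 : 0 ≤ B := div_nonneg (negErr_nonneg ω g) hn0.le
  have hBle : B ≤ 1 - qh := by
    have h1 : B ≤ ((n:ℝ) - m)/n := by
      rw [hB]; gcongr; exact negErr_le ω g
    have h2 : ((n:ℝ) - m)/n = 1 - qh := by
      rw [hqh]; field_simp
    linarith [h1, h2.le]
  have hmne : m ≠ 0 := ne_of_gt hm0
  have hnne : (n:ℝ) ≠ 0 := ne_of_gt hn0
  have hqne : q ≠ 0 := ne_of_gt hq0
  have hq1ne : (1:ℝ) - q ≠ 0 := ne_of_gt hq1'
  have hnmne : (n:ℝ) - m ≠ 0 := ne_of_gt (by linarith)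
  have heq : (2 * p / m) * posErr ω g + (1 / ((n : ℝ) - m)) * negErr ω g -
      ((2 * p / q) * (1 / (n : ℝ)) * posErr ω g +
        (1 / (1 - q)) * (1 / (n : ℝ)) * negErr ω g)
      = 2*p*A*(1/qh - 1/q) + B*(1/(1-qh) - 1/(1-q)) := by
    rw [hA, hB, hqh]
    field_simp
    ring
  rw [heq]
  exact key_aux p ε q qh A B hp0 hε0 (by linarith) hq1.le hq2.le hqh0 hqh1
    hA0 hAle hB0 hBle
end
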